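/- arXiv:2103.00425 — 6 statements merged into one kernel-verified Lean document; each statement's English description precedes it below -/
import Mathlib

section
/- Let G be a finite Frobenius group whose Frobenius complement has order 2. Then G has perfect order classes if, and only if, G is isomorphic to the dihedral group of order 2·3^k for some positive integer k (i.e., the dihedral group of degree a power of 3). -/
/-- The number of elements of order `n` in the group `G`. -/
noncomputable def orderCount (G : Type*) [Group G] (n : ℕ) : ℕ :=
  Nat.card {g : G // orderOf g = n}

/-- A group has *perfect order classes* if, for every positive integer `n`, the number of
elements of order `n` is either zero or a divisor of the order of the group. -/
def PerfectOrderClasses (G : Type*) [Group G] : Prop :=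
  ∀ n : ℕ, 0 < n → orderCount G n = 0 ∨ orderCount G n ∣ Nat.card G

/-- `G` is a Frobenius group with Frobenius kernel `K` and Frobenius complement `H`:
`K` is a nontrivial proper normal subgroup, `H` a subgroup with `K ⊓ H = ⊥` and `KH = G`,
and the conjugation action of `H` on `K` is fixed-point-free. -/
def IsFrobeniusWith {G : Type*} [Group G] (K H : Subgroup G) : Prop :=
  K ≠ ⊥ ∧ K ≠ ⊤ ∧ K.Normal ∧ K ⊓ H = ⊥ ∧
    (∀ g : G, ∃ k ∈ K, ∃ h ∈ H, g = k * h) ∧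
    ∀ h ∈ H, h ≠ 1 → ∀ k ∈ K, k ≠ 1 → h * k * h⁻¹ ≠ k

section Auxiliary

open Subgroup Finset DihedralGroup

lemma orderCount_congr {G G' : Type*} [Group G] [Group G'] (e : G ≃* G') (n : ℕ) :
    orderCount G n = orderCount G' n :=
  Nat.card_congr <| Equiv.subtypeEquiv e.toEquiv fun g => by
    simp [MulEquiv.orderOf_eq e g]

lemma perfectOrderClasses_congr {G G' : Type*} [Group G] [Group G'] (e : G ≃* G')
    (h : PerfectOrderClasses G') : PerfectOrderClasses G := fun n hn => by
  rw [orderCount_congr e, Nat.card_congr e.toEquiv]; exact h n hn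

lemma orderCount_eq_card_filter (A : Type*) [Group A] [Fintype A] [DecidableEq A] (n : ℕ) :
    orderCount A n = #(Finset.univ.filter (fun a : A => orderOf a = n)) := by
  classical
  rw [orderCount, Nat.card_eq_fintype_card, Fintype.card_subtype]

lemma totient_dvd_orderCount (A : Type*) [Group A] [Fintype A] (n : ℕ) :
    Nat.totient n ∣ orderCount A n := by
  classical
  rw [orderCount_eq_card_filter]
  set S := Finset.univ.filter (fun a : A => orderOf a = n) with hS
  have key : ∀ b ∈ S.image (fun a => Subgroup.zpowers a),
      #(S.filter (fun a => Subgroup.zpowers a = b)) = Nat.totient n := by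
    intro b hb
    obtain ⟨a₀, ha₀S, rfl⟩ := Finset.mem_image.1 hb
    have ha₀ : orderOf a₀ = n := by simpa [hS] using ha₀S
    set b := Subgroup.zpowers a₀ with hbdef
    have hcardb : Nat.card b = n := by rw [Nat.card_zpowers, ha₀]
    haveI : IsCyclic b := by
      apply isCyclic_of_orderOf_eq_card (⟨a₀, mem_zpowers a₀⟩ : b)
      rw [Subgroup.orderOf_mk, ha₀, hcardb]
    have hndvd : n ∣ Fintype.card b := by
      rw [← Nat.card_eq_fintype_card, hcardb]
    have := IsCyclic.card_orderOf_eq_totient (α := b) hndvd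
    rw [← this]
    -- build bijection between the fiber and elements of order n in b
    apply Finset.card_bij (fun a _ => (⟨a, by
        rename_i ha
        simp only [Finset.mem_filter, hS, Finset.mem_univ, true_and] at ha
        rw [← ha.2]; exact mem_zpowers a⟩ : b))
    · intro a ha
      simp only [Finset.mem_filter, hS, Finset.mem_univ, true_and] at ha ⊢
      rw [Subgroup.orderOf_mk, ha.1]
    · intro a ha a' ha' h
      exact congrArg Subtype.val h
    · intro x hx
      simp only [Finset.mem_filter, Finset.mem_univ, true_and] at hx
      refine ⟨(x : A), ?_, rfl⟩
      have hxord : orderOf (x : A) = n := by rw [Subgroup.orderOf_coe, hx]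
      have hzx : Subgroup.zpowers x = (⊤ : Subgroup b) := by
        apply Subgroup.eq_top_of_card_eq
        rw [Nat.card_zpowers, hx, hcardb]
      have : Subgroup.zpowers (x : A) = b := by
        have h1 : Subgroup.map b.subtype (Subgroup.zpowers x) = Subgroup.zpowers (x : A) :=
          MonoidHom.map_zpowers b.subtype x
        rw [← h1, hzx, ← MonoidHom.range_eq_map, Subgroup.range_subtype]
      simp only [Finset.mem_filter, hS, Finset.mem_univ, true_and]
      exact ⟨hxord, this⟩
  calc Nat.totient n ∣ Nat.totient n * #(S.image (fun a => Subgroup.zpowers a)) :=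
        dvd_mul_right _ _
    _ = #S := by
        rw [eq_comm, Finset.card_eq_sum_card_fiberwise
          (f := fun a => Subgroup.zpowers a) (t := S.image (fun a => Subgroup.zpowers a))
          (fun a ha => Finset.mem_image_of_mem _ ha),
          Finset.sum_congr rfl key, Finset.sum_const, smul_eq_mul, mul_comm]

def dihedralSubtypeEquiv (m : ℕ) (P : DihedralGroup m → Prop) :
    {x : DihedralGroup m // P x} ≃ {i : ZMod m // P (r i)} ⊕ {i : ZMod m // P (sr i)} where
  toFun := fun x => match x with
    | ⟨.r i, h⟩ => Sum.inl ⟨i, h⟩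
    | ⟨.sr i, h⟩ => Sum.inr ⟨i, h⟩
  invFun := Sum.elim (fun i => ⟨r i.1, i.2⟩) (fun i => ⟨sr i.1, i.2⟩)
  left_inv := by rintro ⟨x | x, h⟩ <;> rfl
  right_inv := by rintro (⟨i, h⟩ | ⟨i, h⟩) <;> rfl

lemma orderCount_dihedral (m : ℕ) [NeZero m] (hmodd : Odd m) (n : ℕ) :
    orderCount (DihedralGroup m) n
      = (if n ∣ m then Nat.totient n else 0) + (if n = 2 then m else 0) := by
  classical
  rw [orderCount, Nat.card_congr (dihedralSubtypeEquiv m (fun x => orderOf x = n)),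
    Nat.card_sum]
  congr 1
  · -- r part
    have hr : ∀ i : ZMod m, orderOf (r i : DihedralGroup m) = addOrderOf i := by
      intro i
      rw [DihedralGroup.orderOf_r i]
      conv_rhs => rw [← ZMod.natCast_rightInverse i]
      exact (ZMod.addOrderOf_coe i.val (NeZero.ne m)).symm
    simp_rw [hr]
    by_cases hdvd : n ∣ m
    · rw [if_pos hdvd, Nat.card_eq_fintype_card, Fintype.card_subtype,
        ← IsAddCyclic.card_addOrderOf_eq_totient (α := ZMod m)
          (by rwa [ZMod.card])]
    · rw [if_neg hdvd]
      rw [Nat.card_eq_zero]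
      left
      rw [isEmpty_subtype]
      intro i hi
      exact hdvd (hi ▸ addOrderOf_dvd_card (x := i) |>.trans (by rw [ZMod.card]))
  · by_cases h2 : n = 2
    · subst h2
      rw [if_pos rfl,
        Nat.card_congr (Equiv.subtypeUnivEquiv (fun i => DihedralGroup.orderOf_sr i)),
        Nat.card_zmod]
    · rw [if_neg h2, Nat.card_eq_zero]
      left
      rw [isEmpty_subtype]
      exact fun i hi => h2 ((DihedralGroup.orderOf_sr i) ▸ hi).symm

lemma perfectOrderClasses_dihedral {k : ℕ} (hk : 0 < k) :
    PerfectOrderClasses (DihedralGroup (3 ^ k)) := by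
  haveI : NeZero (3 ^ k) := ⟨pow_ne_zero k (by norm_num)⟩
  intro n hn
  rw [orderCount_dihedral _ (Odd.pow (⟨1, by norm_num⟩ : Odd 3)) n, DihedralGroup.nat_card]
  by_cases h2 : n = 2
  · subst h2
    rw [if_neg (by intro h; exact (Nat.two_dvd_ne_zero).2 (by simp [Nat.pow_mod]) h), if_pos rfl]
    exact Or.inr ⟨2, by ring⟩
  · rw [if_neg h2, add_zero]
    by_cases hdvd : n ∣ 3 ^ k
    · right
      obtain ⟨j, hj, rfl⟩ := (Nat.dvd_prime_pow (by norm_num)).1 hdvd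
      rcases Nat.eq_zero_or_pos j with rfl | hj0
      · simpa using one_dvd _
      · rw [if_pos hdvd, Nat.totient_prime_pow (by norm_num) hj0]
        calc 3 ^ (j - 1) * (3 - 1) ∣ 3 ^ k * (3 - 1) :=
              mul_dvd_mul_right (pow_dvd_pow 3 (by omega)) _
          _ = 2 * 3 ^ k := by ring
    · left
      rw [if_neg hdvd]

end Auxiliary

open Subgroup

/-- A finite Frobenius group whose Frobenius complement has order 2 has perfect order
classes iff it is a dihedral group of degree a power of 3. -/
theorem frobenius_order_two_complement_perfectOrderClasses_iff
    {G : Type*} [Group G] [Fintype G] (K H : Subgroup G)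
    (hFrob : IsFrobeniusWith K H) (hH : Nat.card H = 2) :
    PerfectOrderClasses G ↔
      ∃ k : ℕ, 0 < k ∧ Nonempty (G ≃* DihedralGroup (3 ^ k)) := by
  obtain ⟨hKbot, hKtop, hKnorm, hKH, hcover, hfpf⟩ := hFrob
  constructor
  swap
  · rintro ⟨k, hk, ⟨e⟩⟩
    exact perfectOrderClasses_congr e (perfectOrderClasses_dihedral hk)
  intro hPOS
  -- ### Setup: the involution h₀
  haveI : Fact (Nat.Prime 2) := ⟨Nat.prime_two⟩
  haveI : Fintype H := Fintype.ofFinite H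
  obtain ⟨x₀, hx₀⟩ := exists_prime_orderOf_dvd_card (G := ↥H) 2
    (by rw [← Nat.card_eq_fintype_card, hH])
  set h₀ : G := (x₀ : G) with hh₀
  have horder : orderOf h₀ = 2 := by rw [Subgroup.orderOf_coe, hx₀]
  have hne1 : h₀ ≠ 1 := by
    intro h; rw [h, orderOf_one] at horder; norm_num at horder
  have hmemH : h₀ ∈ H := x₀.2
  have hsq : h₀ * h₀ = 1 := by
    have := pow_orderOf_eq_one h₀; rwa [horder, sq] at this
  have hinvh : h₀⁻¹ = h₀ := inv_eq_iff_mul_eq_one.2 hsq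
  have hx₀ne1 : x₀ ≠ 1 := by
    intro h
    apply hne1
    rw [hh₀, h]; rfl
  have hHmem : ∀ y ∈ H, y = 1 ∨ y = h₀ := by
    intro y hy
    by_cases h1 : (⟨y, hy⟩ : ↥H) = 1
    · left; exact congrArg Subtype.val h1
    · right
      obtain ⟨z, hz, huniq⟩ := (Nat.card_eq_two_iff' (1 : ↥H)).1 hH
      have e1 : (⟨y, hy⟩ : ↥H) = z := huniq _ h1
      have e2 : x₀ = z := huniq _ hx₀ne1
      rw [hh₀, e2, ← e1]
  -- ### The conjugation automorphism of K and its consequences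
  have hconjmem : ∀ k ∈ K, h₀ * k * h₀⁻¹ ∈ K := fun k hk => hKnorm.conj_mem k hk h₀
  set φ : ↥K →* ↥K :=
    { toFun := fun k => ⟨h₀ * (k : G) * h₀⁻¹, hconjmem k k.2⟩
      map_one' := by ext; simp
      map_mul' := by
        intro a b
        ext
        show h₀ * (↑a * ↑b) * h₀⁻¹ = (h₀ * ↑a * h₀⁻¹) * (h₀ * ↑b * h₀⁻¹)
        group } with hφ
  have hfpfφ : MonoidHom.FixedPointFree φ := by
    intro k hk
    by_contra hk1
    apply hfpf h₀ hmemH hne1 (k : G) k.2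
    · intro h; apply hk1; ext; exact h
    · exact congrArg Subtype.val hk
  have hinvol : Function.Involutive φ := by
    intro k
    ext
    show h₀ * (h₀ * (k : G) * h₀⁻¹) * h₀⁻¹ = k
    rw [hinvh]
    calc h₀ * (h₀ * (k : G) * h₀) * h₀ = (h₀ * h₀) * (k : G) * (h₀ * h₀) := by
          group
      _ = k := by rw [hsq]; group
  have hKinv : ∀ k ∈ K, h₀ * k * h₀⁻¹ = k⁻¹ := by
    intro k hk
    have := congrFun (hfpfφ.coe_eq_inv_of_involutive hinvol) ⟨k, hk⟩
    exact congrArg Subtype.val this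
  have hKcomm : ∀ a b : ↥K, Commute a b := hfpfφ.commute_all_of_involutive hinvol
  have hKodd : Odd (Nat.card ↥K) := hfpfφ.odd_card_of_involutive hinvol
  -- ### cardinality: |G| = 2 |K|
  have hcompl : Subgroup.IsComplement' K H := by
    constructor
    · rintro ⟨⟨k₁, hk₁⟩, ⟨y₁, hy₁⟩⟩ ⟨⟨k₂, hk₂⟩, ⟨y₂, hy₂⟩⟩ hprod
      rw [SetLike.mem_coe] at hk₁ hy₁ hk₂ hy₂
      simp only [Prod.mk.injEq, Subtype.mk.injEq] at hprod ⊢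
      have : k₂⁻¹ * k₁ = y₂ * y₁⁻¹ := by
        have hy2 : y₂ = k₂⁻¹ * (k₁ * y₁) := by rw [hprod]; group
        rw [hy2]; group
      have hmem2 : k₂⁻¹ * k₁ ∈ K ⊓ H := by
        constructor
        · exact mul_mem (K.inv_mem hk₂) hk₁
        · rw [this]; exact mul_mem hy₂ (H.inv_mem hy₁)
      rw [hKH, Subgroup.mem_bot] at hmem2
      have hk : k₁ = k₂ := by
        have := hmem2
        rw [inv_mul_eq_one] at this
        exact this.symm
      have hy : y₁ = y₂ := by
        have h2 : y₂ * y₁⁻¹ = 1 := by rw [← this, hmem2]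
        rw [mul_inv_eq_one] at h2
        exact h2.symm
      exact ⟨hk, hy⟩
    · intro g
      obtain ⟨k, hk, y, hy, rfl⟩ := hcover g
      exact ⟨⟨⟨k, hk⟩, ⟨y, hy⟩⟩, rfl⟩
  have hcardG : Nat.card G = 2 * Nat.card ↥K := by
    rw [← hcompl.card_mul, hH]; ring
  -- ### element structure
  have hsplit : ∀ g : G, g ∈ K ∨ ∃ k ∈ K, g = k * h₀ := by
    intro g
    obtain ⟨k, hk, y, hy, rfl⟩ := hcover g
    rcases hHmem y hy with rfl | rfl
    · left; simpa using hk
    · right; exact ⟨k, hk, rfl⟩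
  have hcosetOrder : ∀ k ∈ K, orderOf (k * h₀) = 2 := by
    intro k hk
    apply orderOf_eq_prime
    · rw [sq]
      have : h₀ * k * h₀⁻¹ = k⁻¹ := hKinv k hk
      calc (k * h₀) * (k * h₀) = k * (h₀ * k * h₀⁻¹) * (h₀ * h₀) := by group
        _ = k * k⁻¹ * (h₀ * h₀) := by rw [this]
        _ = 1 := by rw [hsq]; group
    · intro h1
      rw [mul_eq_one_iff_eq_inv] at h1
      have : h₀ ∈ K ⊓ H := ⟨by rw [← inv_inv h₀, ← h1]; exact K.inv_mem hk, hmemH⟩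
      rw [hKH, Subgroup.mem_bot] at this
      exact hne1 this
  have hoddmem : ∀ g : G, Odd (orderOf g) → g ∈ K := by
    intro g hodd
    rcases hsplit g with hg | ⟨k, hk, rfl⟩
    · exact hg
    · rw [hcosetOrder k hk] at hodd
      exact absurd hodd (by decide)
  have hcountK : ∀ n : ℕ, Odd n → orderCount G n = orderCount ↥K n := by
    intro n hodd
    apply Nat.card_congr
    refine Equiv.mk (fun g => ⟨⟨g.1, hoddmem g.1 (by rw [g.2]; exact hodd)⟩, by
        rw [Subgroup.orderOf_mk]; exact g.2⟩)
      (fun k => ⟨(k.1 : G), by rw [Subgroup.orderOf_coe]; exact k.2⟩) ?_ ?_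
    · intro g; rfl
    · intro k; rfl
  -- ### Step 1: |K| = 3 ^ a
  haveI : Fintype ↥K := Fintype.ofFinite ↥K
  have hKpos : 0 < Nat.card ↥K := Nat.card_pos
  have hKne1 : Nat.card ↥K ≠ 1 := fun h => hKbot (Subgroup.card_eq_one.1 h)
  have hdvd_of_ex : ∀ n : ℕ, Odd n → 1 < n → (∃ x : ↥K, orderOf x = n) →
      orderCount ↥K n ∣ 2 * Nat.card ↥K := by
    rintro n hodd hn ⟨x, hx⟩
    have hpos : orderCount ↥K n ≠ 0 := by
      have : Nonempty {g : ↥K // orderOf g = n} := ⟨⟨x, hx⟩⟩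
      rw [orderCount]
      exact Nat.card_pos.ne'
    rcases hPOS n (by omega) with h | h
    · rw [hcountK n hodd] at h; exact absurd h hpos
    · rw [hcountK n hodd, hcardG] at h; exact h
  have hOddPrime : ∀ p : ℕ, p.Prime → p ∣ Nat.card ↥K → Odd p ∧ 1 < p := by
    intro p hp hpd
    exact ⟨hKodd.of_dvd_nat hpd, hp.one_lt⟩
  have huniq : ∀ {d : ℕ}, d.Prime → d ∣ Nat.card ↥K → ∀ {q : ℕ}, q.Prime →
      q ∣ Nat.card ↥K → d = q := by
    intro p hp hpd q hq hqd
    by_contra hne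
    haveI : Fact p.Prime := ⟨hp⟩
    haveI : Fact q.Prime := ⟨hq⟩
    obtain ⟨x, hx⟩ := exists_prime_orderOf_dvd_card (G := ↥K) p
      (by rwa [← Nat.card_eq_fintype_card])
    obtain ⟨y, hy⟩ := exists_prime_orderOf_dvd_card (G := ↥K) q
      (by rwa [← Nat.card_eq_fintype_card])
    have hcop : Nat.Coprime p q := (Nat.coprime_primes hp hq).2 hne
    have hxy : orderOf (x * y) = p * q := by
      rw [← hx, ← hy]
      exact (hKcomm x y).orderOf_mul_eq_mul_orderOf_of_coprime (by rw [hx, hy]; exact hcop)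
    have h4 : 4 ∣ orderCount ↥K (p * q) := by
      have htot := totient_dvd_orderCount ↥K (p * q)
      rw [Nat.totient_mul hcop, Nat.totient_prime hp, Nat.totient_prime hq] at htot
      refine dvd_trans ?_ htot
      obtain ⟨hpodd, hp1⟩ := hOddPrime p hp hpd
      obtain ⟨hqodd, hq1⟩ := hOddPrime q hq hqd
      obtain ⟨s, hs⟩ := hpodd
      obtain ⟨t, ht⟩ := hqodd
      have : p - 1 = 2 * s := by omega
      have h2 : q - 1 = 2 * t := by omega
      rw [this, h2]
      have hs0 : 0 < s := by omega
      have ht0 : 0 < t := by omega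
      exact ⟨s * t, by ring⟩
    have hd := hdvd_of_ex (p * q)
      ((hOddPrime p hp hpd).1.mul (hOddPrime q hq hqd).1)
      (by nlinarith [hp.one_lt, hq.one_lt]) ⟨x * y, hxy⟩
    have h42 : (4 : ℕ) ∣ 2 * Nat.card ↥K := h4.trans hd
    obtain ⟨c, hc⟩ := h42
    obtain ⟨d, hdK⟩ := hKodd
    omega
  obtain ⟨p, hp, hpd⟩ := Nat.exists_prime_and_dvd hKne1
  have hKcard : Nat.card ↥K = p ^ (Nat.card ↥K).primeFactorsList.length :=
    Nat.eq_prime_pow_of_unique_prime_dvd hKpos.ne'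
      (fun {d} hd hdd => huniq hd hdd hp hpd)
  set a := (Nat.card ↥K).primeFactorsList.length with ha
  have ha1 : 1 ≤ a := by
    by_contra h
    rw [not_le, Nat.lt_one_iff] at h
    rw [h, pow_zero] at hKcard
    exact hKne1 hKcard
  -- ### Step 1b: p = 3 and the p-torsion subgroup has exactly 3 elements
  classical
  haveI : Fact p.Prime := ⟨hp⟩
  obtain ⟨x₁, hx₁⟩ := exists_prime_orderOf_dvd_card (G := ↥K) p
    (by rwa [← Nat.card_eq_fintype_card])
  obtain ⟨hpodd, hp1⟩ := hOddPrime p hp hpd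
  set Ω : Subgroup ↥K :=
    { carrier := {x : ↥K | x ^ p = 1}
      one_mem' := one_pow p
      mul_mem' := by
        intro a b ha hb
        show (a * b) ^ p = 1
        rw [(hKcomm a b).mul_pow, ha, hb, one_mul]
      inv_mem' := by
        intro a ha
        show a⁻¹ ^ p = 1
        rw [inv_pow, show a ^ p = 1 from ha, inv_one] } with hΩ
  have hcardΩ : Nat.card ↥Ω = orderCount ↥K p + 1 := by
    have e1 : ↥Ω ≃ {x : ↥K // orderOf x = p ∨ x = 1} := by
      apply Equiv.subtypeEquivRight
      intro x
      show x ^ p = 1 ↔ _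
      constructor
      · intro hxp
        rcases (Nat.dvd_prime hp).1 (orderOf_dvd_of_pow_eq_one hxp) with h1 | h1
        · right; exact orderOf_eq_one_iff.1 h1
        · left; exact h1
      · rintro (h1 | rfl)
        · rw [← h1]; exact pow_orderOf_eq_one x
        · exact one_pow p
    have e2 : {x : ↥K // orderOf x = p ∨ x = 1} ≃
        {x : ↥K // orderOf x = p} ⊕ {x : ↥K // x = 1} :=
      subtypeOrEquiv _ _ (by
        rintro s hs1 hs2 x hx
        have h1 := hs1 x hx
        have h2 := hs2 x hx
        simp only at h1 h2
        rw [h2, orderOf_one] at h1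
        exact absurd h1.symm hp.ne_one)
    haveI : Unique {x : ↥K // x = 1} :=
      ⟨⟨⟨1, rfl⟩⟩, by rintro ⟨x, rfl⟩; rfl⟩
    rw [Nat.card_congr (e1.trans e2), Nat.card_sum, orderCount]
    congr 1
    exact Nat.card_unique
  have hpΩ : p ∣ Nat.card ↥Ω := by
    have hx₁Ω : x₁ ∈ Ω := by
      show x₁ ^ p = 1
      rw [← hx₁]; exact pow_orderOf_eq_one x₁
    have : orderOf (⟨x₁, hx₁Ω⟩ : ↥Ω) = p := by rw [Subgroup.orderOf_mk, hx₁]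
    rw [← this]
    exact orderOf_dvd_natCard _
  have hcount2 : orderCount ↥K p = 2 := by
    have hdvd2K : orderCount ↥K p ∣ 2 * Nat.card ↥K :=
      hdvd_of_ex p hpodd hp1 ⟨x₁, hx₁⟩
    have hpnd : ¬ p ∣ orderCount ↥K p := by
      intro hcon
      have : p ∣ 1 := (Nat.dvd_add_right hcon).1 (hcardΩ ▸ hpΩ)
      exact hp.one_lt.ne' (Nat.dvd_one.1 this)
    have hcop : (Nat.card ↥K).Coprime (orderCount ↥K p) := by
      rw [hKcard]
      exact Nat.Coprime.pow_left _ ((Nat.Prime.coprime_iff_not_dvd hp).2 hpnd)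
    have hdvd2 : orderCount ↥K p ∣ 2 :=
      (Nat.Coprime.dvd_of_dvd_mul_right hcop.symm) hdvd2K
    have htot : p - 1 ∣ orderCount ↥K p := by
      have := totient_dvd_orderCount ↥K p
      rwa [Nat.totient_prime hp] at this
    rcases (Nat.dvd_prime Nat.prime_two).1 hdvd2 with h1 | h2
    · exfalso
      rw [h1] at htot
      have := Nat.le_of_dvd one_pos htot
      obtain ⟨s, hs⟩ := hpodd
      omega
    · exact h2
  have hp3 : p = 3 := by
    have htot : p - 1 ∣ orderCount ↥K p := by
      have := totient_dvd_orderCount ↥K p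
      rwa [Nat.totient_prime hp] at this
    rw [hcount2] at htot
    have := Nat.le_of_dvd (by omega) htot
    obtain ⟨s, hs⟩ := hpodd
    omega
  have hΩ3 : Nat.card ↥Ω = 3 := by rw [hcardΩ, hcount2]
  -- ### Step 2: K is cyclic
  have hΩfilter : Finset.card (Finset.univ.filter (fun x : ↥K => x ^ p = 1)) = 3 := by
    rw [← Fintype.card_subtype, ← Nat.card_eq_fintype_card, ← hΩ3]
    exact (Nat.card_congr (Equiv.subtypeEquivRight (fun x => Iff.rfl))).symm
  have hpow_le : ∀ j : ℕ, Finset.card (Finset.univ.filter (fun x : ↥K => x ^ p ^ j = 1)) ≤ p ^ j := by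
    intro j
    induction j with
    | zero =>
      simp only [pow_zero, pow_one]
      have : (Finset.univ.filter (fun x : ↥K => x = 1)) ⊆ {1} := by
        intro x hx
        simp only [Finset.mem_filter] at hx
        simp [hx.2]
      calc Finset.card (Finset.univ.filter (fun x : ↥K => x = 1)) ≤ Finset.card ({1} : Finset ↥K) :=
            Finset.card_le_card this
        _ = 1 := Finset.card_singleton 1
    | succ j ih =>
      have hmaps : ∀ x ∈ Finset.univ.filter (fun x : ↥K => x ^ p ^ (j + 1) = 1),
          x ^ p ∈ Finset.univ.filter (fun x : ↥K => x ^ p ^ j = 1) := by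
        intro x hx
        simp only [Finset.mem_filter, Finset.mem_univ, true_and] at hx ⊢
        rw [← pow_mul, ← pow_succ']
        exact hx
      have hfib : ∀ b ∈ Finset.univ.filter (fun x : ↥K => x ^ p ^ j = 1),
          Finset.card ((Finset.univ.filter (fun x : ↥K => x ^ p ^ (j + 1) = 1)).filter
            (fun x => x ^ p = b)) ≤ p := by
        intro b _
        set F := (Finset.univ.filter (fun x : ↥K => x ^ p ^ (j + 1) = 1)).filter
            (fun x => x ^ p = b) with hF
        rcases Finset.eq_empty_or_nonempty F with hFe | ⟨a₀, ha₀⟩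
        · rw [hFe]; simp [hp.pos.le]
        · have ha₀' : a₀ ^ p = b := by
            simp only [hF, Finset.mem_filter] at ha₀
            exact ha₀.2
          have hinj : ∀ x ∈ F, x * a₀⁻¹ ∈ Finset.univ.filter (fun x : ↥K => x ^ p = 1) := by
            intro x hx
            simp only [hF, Finset.mem_filter, Finset.mem_univ, true_and] at hx ⊢
            rw [(hKcomm x a₀⁻¹).mul_pow, inv_pow, hx.2, ha₀', mul_inv_cancel]
          calc F.card ≤ Finset.card (Finset.univ.filter (fun x : ↥K => x ^ p = 1)) := by
                apply Finset.card_le_card_of_injOn (fun x => x * a₀⁻¹) hinj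
                intro u _ v _ huv
                exact mul_right_cancel huv
            _ = 3 := hΩfilter
            _ = p := hp3.symm
      calc Finset.card (Finset.univ.filter (fun x : ↥K => x ^ p ^ (j + 1) = 1))
          ≤ p * Finset.card (Finset.univ.filter (fun x : ↥K => x ^ p ^ j = 1)) :=
            Finset.card_le_mul_card_image_of_maps_to hmaps p hfib
        _ ≤ p * p ^ j := Nat.mul_le_mul_left p ih
        _ = p ^ (j + 1) := (pow_succ' p j).symm
  haveI hKcyc : IsCyclic ↥K := by
    apply isCyclic_of_card_pow_eq_one_le
    intro n hn
    obtain ⟨j, hj, hgcd⟩ := (Nat.dvd_prime_pow hp).1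
      (hKcard ▸ Nat.gcd_dvd_right n (Nat.card ↥K))
    have hsub : (Finset.univ.filter (fun x : ↥K => x ^ n = 1)) ⊆
        (Finset.univ.filter (fun x : ↥K => x ^ p ^ j = 1)) := by
      intro x hx
      simp only [Finset.mem_filter, Finset.mem_univ, true_and] at hx ⊢
      rw [← hgcd]
      have h1 : orderOf x ∣ n := orderOf_dvd_of_pow_eq_one hx
      have h2 : orderOf x ∣ Nat.card ↥K := orderOf_dvd_natCard x
      rw [hKcard] at h2
      exact orderOf_dvd_iff_pow_eq_one.1 (Nat.dvd_gcd h1 h2)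
    calc Finset.card (Finset.univ.filter (fun x : ↥K => x ^ n = 1)) ≤ p ^ j :=
          le_trans (Finset.card_le_card hsub) (hpow_le j)
      _ = Nat.gcd n (p ^ a) := hgcd.symm
      _ ≤ n := Nat.le_of_dvd hn (Nat.gcd_dvd_left _ _)
  -- ### Step 3: construct the isomorphism
  subst hp3
  refine ⟨a, ha1, ?_⟩
  obtain ⟨g₁, hg₁⟩ := IsCyclic.exists_generator (α := ↥K)
  have hgord : orderOf g₁ = 3 ^ a := by
    rw [orderOf_eq_card_of_forall_mem_zpowers hg₁, hKcard]
  set g₀ : G := (g₁ : G) with hg₀def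
  have hg₀K : g₀ ∈ K := g₁.2
  have hg₀ord : orderOf g₀ = 3 ^ a := by rw [hg₀def, Subgroup.orderOf_coe, hgord]
  haveI : NeZero (3 ^ a) := ⟨pow_ne_zero a (by norm_num)⟩
  set pw : ZMod (3 ^ a) → G := fun i => g₀ ^ i.val with hpwdef
  have hpw_nat : ∀ t : ℕ, pw (t : ZMod (3 ^ a)) = g₀ ^ t := by
    intro t
    rw [hpwdef]
    simp only
    rw [pow_eq_pow_iff_modEq, hg₀ord, ZMod.val_natCast]
    exact Nat.mod_modEq t (3 ^ a)
  have hpw_add : ∀ i j : ZMod (3 ^ a), pw (i + j) = pw i * pw j := by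
    intro i j
    rw [hpwdef]
    simp only
    rw [← pow_add, pow_eq_pow_iff_modEq, hg₀ord, ZMod.val_add]
    exact Nat.mod_modEq _ (3 ^ a)
  have hpw_zero : pw 0 = 1 := by rw [hpwdef]; simp
  have hpw_neg : ∀ i : ZMod (3 ^ a), pw (-i) = (pw i)⁻¹ := by
    intro i
    have h1 := hpw_add i (-i)
    rw [show i + -i = 0 from by ring, hpw_zero] at h1
    exact (inv_eq_of_mul_eq_one_right h1.symm).symm
  have hpw_sub : ∀ i j : ZMod (3 ^ a), pw (i - j) = pw i * (pw j)⁻¹ := by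
    intro i j
    rw [sub_eq_add_neg, hpw_add, hpw_neg]
  have hpwK : ∀ i, pw i ∈ K := fun i => pow_mem hg₀K _
  have hpw_comm : ∀ i j, Commute (pw i) (pw j) := fun i j => Commute.pow_pow_self g₀ _ _
  have hswap : ∀ i, h₀ * pw i = (pw i)⁻¹ * h₀ := by
    intro i
    have h1 := hKinv (pw i) (hpwK i)
    calc h₀ * pw i = (h₀ * pw i * h₀⁻¹) * h₀ := by group
      _ = (pw i)⁻¹ * h₀ := by rw [h1]
  have hswap' : ∀ i, h₀ * (pw i)⁻¹ = pw i * h₀ := by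
    intro i
    have h1 := hswap (-i)
    rwa [hpw_neg, inv_inv] at h1
  set F : DihedralGroup (3 ^ a) → G := fun x => match x with
    | DihedralGroup.r i => pw i
    | DihedralGroup.sr i => (pw i)⁻¹ * h₀
    with hFdef
  have hFr : ∀ i, F (DihedralGroup.r i) = pw i := fun i => rfl
  have hFsr : ∀ i, F (DihedralGroup.sr i) = (pw i)⁻¹ * h₀ := fun i => rfl
  have hFmul : ∀ x y : DihedralGroup (3 ^ a), F (x * y) = F x * F y := by
    rintro (i | i) (j | j)
    · rw [DihedralGroup.r_mul_r, hFr, hFr, hFr, hpw_add]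
    · rw [DihedralGroup.r_mul_sr, hFr, hFsr, hFsr, hpw_sub]
      rw [mul_inv_rev, inv_inv, mul_assoc]
    · rw [DihedralGroup.sr_mul_r, hFsr, hFr, hFsr, hpw_add, mul_inv_rev]
      calc (pw j)⁻¹ * (pw i)⁻¹ * h₀
          = (pw i)⁻¹ * ((pw j)⁻¹ * h₀) := by
            rw [(hpw_comm j i).inv_inv.eq, mul_assoc]
        _ = (pw i)⁻¹ * (h₀ * pw j) := by rw [← hswap j]
        _ = (pw i)⁻¹ * h₀ * pw j := by rw [mul_assoc]
    · rw [DihedralGroup.sr_mul_sr, hFsr, hFsr, hFr, hpw_sub]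
      calc pw j * (pw i)⁻¹ = (pw i)⁻¹ * pw j := ((hpw_comm i j).inv_left.eq).symm
        _ = (pw i)⁻¹ * (pw j * h₀ * h₀) := by
            rw [mul_assoc (pw j) h₀ h₀, hsq, mul_one]
        _ = (pw i)⁻¹ * (h₀ * (pw j)⁻¹ * h₀) := by rw [← hswap' j]
        _ = (pw i)⁻¹ * h₀ * ((pw j)⁻¹ * h₀) := by group
  set Fhom : DihedralGroup (3 ^ a) →* G := MonoidHom.mk' F hFmul with hFhom
  have hFsurj : Function.Surjective Fhom := by
    intro y
    have hKpow : ∀ z ∈ K, ∃ t : ℕ, g₀ ^ t = z := by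
      intro z hz
      have := hg₁ ⟨z, hz⟩
      rw [← mem_powers_iff_mem_zpowers] at this
      obtain ⟨t, ht⟩ := this
      refine ⟨t, ?_⟩
      rw [hg₀def, ← Subgroup.coe_pow]
      exact congrArg Subtype.val ht
    rcases hsplit y with hy | ⟨z, hz, rfl⟩
    · obtain ⟨t, ht⟩ := hKpow y hy
      refine ⟨DihedralGroup.r (t : ZMod (3 ^ a)), ?_⟩
      show F (DihedralGroup.r (t : ZMod (3 ^ a))) = y
      rw [hFr, hpw_nat, ht]
    · obtain ⟨t, ht⟩ := hKpow z hz
      refine ⟨DihedralGroup.sr (-(t : ZMod (3 ^ a))), ?_⟩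
      show F (DihedralGroup.sr (-(t : ZMod (3 ^ a)))) = z * h₀
      rw [hFsr, hpw_neg, inv_inv, hpw_nat, ht]
  have hcards : Fintype.card (DihedralGroup (3 ^ a)) = Fintype.card G := by
    rw [DihedralGroup.card, ← Nat.card_eq_fintype_card (α := G), hcardG, hKcard]
  have hFbij : Function.Bijective Fhom :=
    (Fintype.bijective_iff_surjective_and_card Fhom).2 ⟨hFsurj, hcards⟩
  exact ⟨(MulEquiv.ofBijective Fhom hFbij).symm⟩
end

section
/- Let G be a finite Frobenius group with Frobenius kernel K and Frobenius complement H. (1) For every g ∈ K, the number of elements of G whose order equals the order of g is equal to the number of elements of K whose order equals the order of g. (2) For every g ∈ G with g ∉ K, the number of elements of G whose order equals the order of g is equal to |K| times the number of elements of H whose order equals the order of g. -/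
/-- Order-class counting in a finite Frobenius group: order classes of kernel elements are
counted inside the kernel, and the order class of an element outside the kernel has size
`|K|` times the size of the corresponding order class of the complement. -/
theorem frobenius_orderCount
    {G : Type*} [Group G] [Fintype G] (K H : Subgroup G)
    (hFrob : IsFrobeniusWith K H) :
    (∀ g : G, g ∈ K →
      Nat.card {x : G // orderOf x = orderOf g} =
        Nat.card {x : K // orderOf (x : G) = orderOf g}) ∧
    (∀ g : G, g ∉ K →
      Nat.card {x : G // orderOf x = orderOf g} =
        Nat.card K * Nat.card {x : H // orderOf (x : G) = orderOf g}) := by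
  obtain ⟨hKbot, hKtop, hN, hKH, hcover, hfpf⟩ := hFrob
  haveI := hN
  -- conjugation preserves order
  have orderConj : ∀ a x : G, orderOf (a * x * a⁻¹) = orderOf x := fun a x =>
    orderOf_injective (MulAut.conj a).toMonoidHom (MulAut.conj a).injective x
  -- intersection triviality
  have hKHmem : ∀ x : G, x ∈ K → x ∈ H → x = 1 := by
    intro x hxK hxH
    have : x ∈ K ⊓ H := ⟨hxK, hxH⟩
    rw [hKH, Subgroup.mem_bot] at this
    exact this
  -- if a nontrivial element of H is conjugated into H by an element of K, the element is 1
  have claim1 : ∀ k ∈ K, ∀ h ∈ H, h ≠ 1 → k * h * k⁻¹ ∈ H → k = 1 := by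
    intro k hk h hh hne hmem
    have h1 : k * h * k⁻¹ * h⁻¹ ∈ K := by
      have h2 : h * k⁻¹ * h⁻¹ ∈ K := hN.conj_mem _ (K.inv_mem hk) h
      have h3 := K.mul_mem hk h2
      have e : k * (h * k⁻¹ * h⁻¹) = k * h * k⁻¹ * h⁻¹ := by group
      rwa [e] at h3
    have h2 : k * h * k⁻¹ * h⁻¹ ∈ H := H.mul_mem hmem (H.inv_mem hh)
    have h3 : k * h * k⁻¹ * h⁻¹ = 1 := hKHmem _ h1 h2
    have h4 : h * k * h⁻¹ = k := by
      have : k * h = h * k := by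
        have := mul_eq_one_iff_eq_inv.mp h3
        calc k * h = (k * h * k⁻¹) * k := by group
        _ = h * k := by rw [mul_eq_one_iff_eq_inv.mp h3]; group
      calc h * k * h⁻¹ = h * k * h⁻¹ := rfl
      _ = k := by rw [show h * k = k * h from this.symm]; group
    by_contra hkne
    exact hfpf h hh hne k hk hkne h4
  -- every element outside K is a K-conjugate of a nontrivial element of H
  have memK : ∀ x : G, x ∉ K → ∃ a ∈ K, ∃ h ∈ H, h ≠ 1 ∧ x = a * h * a⁻¹ := by
    intro x hx
    obtain ⟨k, hk, h, hh, rfl⟩ := hcover x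
    have hne : h ≠ 1 := by
      rintro rfl; exact hx (by simpa using hk)
    -- the map a ↦ a * (h * a⁻¹ * h⁻¹) from K to K is injective, hence surjective
    let f : ↥K → ↥K := fun a =>
      ⟨(a : G) * (h * (a : G)⁻¹ * h⁻¹), K.mul_mem a.2 (hN.conj_mem _ (K.inv_mem a.2) h)⟩
    have hinj : Function.Injective f := by
      intro a b hab
      have hab' : (a : G) * (h * (a : G)⁻¹ * h⁻¹) = (b : G) * (h * (b : G)⁻¹ * h⁻¹) :=
        congrArg Subtype.val hab
      have e1 : ((b : G)⁻¹ * a) * h * ((b : G)⁻¹ * a)⁻¹ * h⁻¹ = 1 := by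
        have : (b : G)⁻¹ * ((a : G) * (h * (a : G)⁻¹ * h⁻¹)) * (h * (b:G)⁻¹ * h⁻¹)⁻¹
            = ((b : G)⁻¹ * a) * h * ((b : G)⁻¹ * a)⁻¹ * h⁻¹ := by group
        rw [← this, hab']; group
      have e2 : ((b : G)⁻¹ * a) * h * ((b : G)⁻¹ * a)⁻¹ = h := by
        have := mul_eq_one_iff_eq_inv.mp e1
        rw [this]; group
      have : (b : G)⁻¹ * a = 1 := claim1 _ (K.mul_mem (K.inv_mem b.2) a.2) h hh hne
        (by rw [e2]; exact hh)
      exact Subtype.ext (inv_mul_eq_one.mp this).symm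
    have hsurj : Function.Surjective f := Finite.surjective_of_injective hinj
    obtain ⟨a, ha⟩ := hsurj ⟨k, hk⟩
    have ha' : (a : G) * (h * (a : G)⁻¹ * h⁻¹) = k := congrArg Subtype.val ha
    exact ⟨a, a.2, h, hh, hne, by rw [← ha']; group⟩
  -- coprimality of |K| and |H|
  have hcop : Nat.Coprime (Nat.card K) (Nat.card H) := by
    by_contra hnc
    obtain ⟨p, hp, hpK, hpH⟩ := Nat.Prime.not_coprime_iff_dvd.mp hnc
    haveI : Fact p.Prime := ⟨hp⟩
    letI : Fintype ↥H := Fintype.ofFinite _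
    obtain ⟨hh, hhord⟩ := exists_prime_orderOf_dvd_card (G := ↥H) p
      (by rwa [← Nat.card_eq_fintype_card])
    set h : G := (hh : G) with hdef
    have hmemH : h ∈ H := hh.2
    have hordh : orderOf h = p := by rw [hdef, Subgroup.orderOf_coe, hhord]
    have hne : h ≠ 1 := by
      intro h1
      rw [h1, orderOf_one] at hordh
      exact hp.one_lt.ne' hordh.symm
    -- the cyclic group generated by h acts on K by conjugation
    set Z := Subgroup.zpowers h with hZ
    have hZcard : Nat.card Z = p := by rw [hZ, Nat.card_zpowers, hordh]
    have hPZ : IsPGroup p Z := IsPGroup.of_card (n := 1) (by rw [hZcard, pow_one])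
    letI : MulAction Z ↥K :=
      MulAction.compHom _ ((MulAut.conjNormal (H := K)).comp Z.subtype)
    have hmod := hPZ.card_modEq_card_fixedPoints (↥K)
    have hfix : MulAction.fixedPoints Z ↥K = {(1 : ↥K)} := by
      ext k
      simp only [MulAction.mem_fixedPoints, Set.mem_singleton_iff]
      constructor
      · intro hk
        have h5 := hk ⟨h, Subgroup.mem_zpowers h⟩
        have hval : ((MulAut.conjNormal (H := K)) (((⟨h, Subgroup.mem_zpowers h⟩ : Z) : G)) k : G)
            = (k : G) := congrArg Subtype.val h5
        rw [MulAut.conjNormal_apply] at hval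
        have hconj : h * (k : G) * h⁻¹ = (k : G) := hval
        by_contra hkne
        exact hfpf h hmemH hne (k : G) k.2 (fun h1 => hkne (Subtype.ext h1)) hconj
      · rintro rfl z
        show (MulAut.conjNormal (H := K)) (Z.subtype z) 1 = 1
        exact map_one _
    rw [hfix] at hmod
    have h1 : Nat.card ({(1 : ↥K)} : Set ↥K) = 1 := by simp
    rw [h1] at hmod
    have hmod' : Nat.card ↥K % p = 1 % p := hmod
    have h0 : Nat.card ↥K % p = 0 := Nat.eq_zero_of_dvd_of_lt ((Nat.dvd_mod_iff (dvd_refl p)).mpr hpK) (Nat.mod_lt _ hp.pos)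
    have h1' : (1 : ℕ) % p = 1 := Nat.mod_eq_of_lt hp.one_lt
    omega
  -- from coprimality: common divisors are 1
  have hone : ∀ n : ℕ, n ∣ Nat.card K → n ∣ Nat.card H → n = 1 := by
    intro n h1 h2
    have := Nat.dvd_gcd h1 h2
    rw [Nat.Coprime] at hcop
    rw [hcop] at this
    exact Nat.dvd_one.mp this
  -- order of element outside K divides |H|
  have hdvdH : ∀ x : G, x ∉ K → orderOf x ∣ Nat.card H := by
    intro x hx
    obtain ⟨a, _, h, hh, _, rfl⟩ := memK x hx
    rw [orderConj]
    exact Subgroup.orderOf_dvd_natCard H hh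
  constructor
  · -- part 1
    intro g hg
    set n := orderOf g with hn
    have key : ∀ x : G, orderOf x = n → x ∈ K := by
      intro x hx
      by_contra hxK
      have d1 : n ∣ Nat.card H := hx ▸ hdvdH x hxK
      have d2 : n ∣ Nat.card K := hn ▸ Subgroup.orderOf_dvd_natCard K hg
      have hn1 : n = 1 := hone n d2 d1
      rw [hn1, orderOf_eq_one_iff] at hx
      exact hxK (hx ▸ K.one_mem)
    symm
    apply Nat.card_congr
    refine Equiv.ofBijective (fun x => ⟨(x.1 : G), x.2⟩) ⟨?_, ?_⟩
    · intro a b hab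
      have h' := Subtype.ext_iff.mp hab
      exact Subtype.ext (Subtype.ext h')
    · intro x
      exact ⟨⟨⟨x.1, key x.1 x.2⟩, x.2⟩, rfl⟩
  · -- part 2
    intro g hg
    set n := orderOf g with hn
    have hgne : g ≠ 1 := fun h1 => hg (h1 ▸ K.one_mem)
    have hnne : n ≠ 1 := fun h1 => hgne (orderOf_eq_one_iff.mp (hn ▸ h1))
    have key2 : ∀ x : G, orderOf x = n → x ∉ K := by
      intro x hx hxK
      have d1 : n ∣ Nat.card H := hn ▸ hdvdH g hg
      have d2 : n ∣ Nat.card K := hx ▸ Subgroup.orderOf_dvd_natCard K hxK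
      exact hnne (hone n d2 d1)
    have : Nat.card {x : G // orderOf x = n}
        = Nat.card (↥K × {x : ↥H // orderOf (x : G) = n}) := by
      symm
      apply Nat.card_congr
      refine Equiv.ofBijective (fun p => ⟨(p.1 : G) * (p.2.1 : G) * (p.1 : G)⁻¹,
        by rw [orderConj]; exact p.2.2⟩) ⟨?_, ?_⟩
      · intro pq qr hab
        obtain ⟨a, h₁, hh₁⟩ := pq
        obtain ⟨b, h₂, hh₂⟩ := qr
        have hab' : (a : G) * (h₁ : G) * (a : G)⁻¹ = (b : G) * (h₂ : G) * (b : G)⁻¹ :=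
          congrArg Subtype.val hab
        have hne₁ : (h₁ : G) ≠ 1 := by
          intro h1
          rw [h1, orderOf_one] at hh₁
          exact hnne hh₁.symm
        have e2 : ((b : G)⁻¹ * a) * (h₁ : G) * ((b : G)⁻¹ * a)⁻¹ = (h₂ : G) := by
          have e3 : (b : G)⁻¹ * ((a : G) * (h₁ : G) * (a : G)⁻¹) * b
              = ((b : G)⁻¹ * a) * (h₁ : G) * ((b : G)⁻¹ * a)⁻¹ := by group
          rw [← e3, hab']; group
        have hba : (b : G)⁻¹ * a = 1 := claim1 _ (K.mul_mem (K.inv_mem b.2) a.2) h₁ h₁.2 hne₁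
          (by rw [e2]; exact h₂.2)
        have hab2 : (a : G) = b := (inv_mul_eq_one.mp hba).symm
        have hh12 : (h₁ : G) = h₂ := by
          rw [← e2, hba]; group
        exact Prod.ext (Subtype.ext hab2) (Subtype.ext (Subtype.ext hh12))
      · rintro ⟨x, hx⟩
        obtain ⟨a, ha, h, hh, hne, rfl⟩ := memK x (key2 x hx)
        refine ⟨⟨⟨a, ha⟩, ⟨⟨h, hh⟩, ?_⟩⟩, rfl⟩
        rw [← hx, orderConj]
    rw [this, Nat.card_prod]
end

section
/- Let p and q be prime numbers, both greater than 5, and let r and m be positive integers with r > 1. Suppose that q - 1 divides 240, but that q does not divide 240. Then p^r - 1 = 240·q^m holds only for (p, r, q, m) = (11, 4, 61, 1) or (p, r, q, m) = (41, 2, 7, 1). -/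
lemma pow_mod_cycle (a r d n : ℕ) (hn : 1 < n) (h : a ^ d % n = 1) :
    a ^ r % n = a ^ (r % d) % n := by
  conv_lhs => rw [← Nat.div_add_mod r d]
  rw [pow_add, pow_mul, Nat.mul_mod, Nat.pow_mod, h, one_pow,
    Nat.one_mod_eq_one.mpr (by omega), one_mul, Nat.mod_mod_of_dvd _ dvd_rfl]

lemma odd_pow_mod (p r n : ℕ) (hn : 1 < n) (hr : r % 2 = 1) (h1 : p ^ r % n = 1)
    (h4 : (p % n) ^ 4 % n = 1)
    (H : ∀ a < n, a ^ 4 % n = 1 → (a ^ 1 % n = 1 → a = 1) ∧ (a ^ 3 % n = 1 → a = 1)) :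
    p % n = 1 := by
  rw [Nat.pow_mod] at h1
  rw [pow_mod_cycle _ r 4 n hn h4] at h1
  obtain ⟨H1, H3⟩ := H (p % n) (Nat.mod_lt _ (by omega)) h4
  have : r % 4 = 1 ∨ r % 4 = 3 := by omega
  rcases this with h | h <;> rw [h] at h1
  · exact H1 h1
  · exact H3 h1

lemma dio240_even (p q s m : ℕ) (hp : p.Prime) (hq : q.Prime)
    (hp5 : 5 < p) (hq5 : 5 < q) (hr : 1 < s + s) (hm : 0 < m)
    (hq1 : (q - 1) ∣ 240) (hqnd : ¬ q ∣ 240)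
    (heq : p ^ (s + s) - 1 = 240 * q ^ m) :
    (p = 11 ∧ s + s = 4 ∧ q = 61 ∧ m = 1) ∨ (p = 41 ∧ s + s = 2 ∧ q = 7 ∧ m = 1) := by
  have hp7 : 7 ≤ p := by rcases hp.eq_two_or_odd with h | h <;> omega
  have hq7 : 7 ≤ q := by rcases hq.eq_two_or_odd with h | h <;> omega
  have hps : 0 < p ^ (s + s) := pow_pos (by omega) _
  have hP : p ^ (s + s) = 240 * q ^ m + 1 := by omega
  have hs1 : 1 ≤ s := by omega
  have hy : p ^ s * p ^ s = p ^ (s + s) := by rw [← pow_add]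
  have hyp : 7 ≤ p ^ s := le_trans hp7 (Nat.le_self_pow (by omega) p)
  obtain ⟨z, hz⟩ : ∃ z, p ^ s = z + 1 := ⟨p ^ s - 1, by omega⟩
  rw [hz] at hy
  have h2 : z * (z + 2) = 240 * q ^ m := by
    have e1 : (z + 1) * (z + 1) = z * (z + 2) + 1 := by ring
    linarith [e1, hy, hP]
  have hz6 : 6 ≤ z := by omega
  -- q divides one factor, so the other is at most 240
  have hqd : q ∣ z * (z + 2) := by
    rw [h2]; exact Dvd.dvd.mul_left (dvd_pow_self q hm.ne') 240
  have hz240 : z ≤ 240 := by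
    rcases (Nat.Prime.dvd_mul hq).mp hqd with hA | hB
    · have hnB : ¬ q ∣ (z + 2) := by
        intro h
        have h2' : q ∣ 2 := by
          have := Nat.dvd_sub h hA
          simpa using this
        have := Nat.le_of_dvd (by norm_num) h2'
        omega
      have hcop : Nat.Coprime (q ^ m) (z + 2) :=
        Nat.Coprime.pow_left m ((Nat.Prime.coprime_iff_not_dvd hq).mpr hnB)
      have hqz : q ^ m ∣ z := by
        refine hcop.dvd_of_dvd_mul_right ?_
        exact ⟨240, by rw [h2, mul_comm]⟩
      obtain ⟨b, hb⟩ := hqz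
      have hcan : q ^ m * (b * (z + 2)) = q ^ m * 240 := by
        rw [show q ^ m * (b * (z + 2)) = (q ^ m * b) * (z + 2) by ring, ← hb, h2]; ring
      have hb240 : b * (z + 2) = 240 := Nat.eq_of_mul_eq_mul_left (pow_pos (by omega) m) hcan
      have : z + 2 ≤ 240 := Nat.le_of_dvd (by norm_num) ⟨b, by rw [mul_comm]; exact hb240.symm⟩
      omega
    · have hnA : ¬ q ∣ z := by
        intro h
        have h2' : q ∣ 2 := by
          have := Nat.dvd_sub hB h
          simpa using this
        have := Nat.le_of_dvd (by norm_num) h2'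
        omega
      have hcop : Nat.Coprime (q ^ m) z :=
        Nat.Coprime.pow_left m ((Nat.Prime.coprime_iff_not_dvd hq).mpr hnA)
      have hqz : q ^ m ∣ z + 2 := by
        refine hcop.dvd_of_dvd_mul_left ?_
        exact ⟨240, by rw [h2, mul_comm]⟩
      obtain ⟨b, hb⟩ := hqz
      have hcan : q ^ m * (z * b) = q ^ m * 240 := by
        rw [show q ^ m * (z * b) = z * (q ^ m * b) by ring, ← hb, h2]; ring
      have hb240 : z * b = 240 := Nat.eq_of_mul_eq_mul_left (pow_pos (by omega) m) hcan
      exact Nat.le_of_dvd (by norm_num) ⟨b, hb240.symm⟩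
  -- bounds on q^m, m, s
  have hqm242 : q ^ m ≤ 242 := by
    have h1 : 240 * q ^ m ≤ 240 * 242 := by
      rw [← h2]; exact Nat.mul_le_mul (by omega) (by omega)
    omega
  have hqle : q ≤ q ^ m := Nat.le_self_pow hm.ne' q
  have hm2 : m ≤ 2 := by
    by_contra hc
    have h1 : (343:ℕ) ≤ q ^ m := by
      calc (343:ℕ) = 7 ^ 3 := by norm_num
        _ ≤ q ^ 3 := Nat.pow_le_pow_left (by omega) 3
        _ ≤ q ^ m := Nat.pow_le_pow_right (by omega) (by omega)
    omega
  have hs2 : s ≤ 2 := by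
    by_contra hc
    have h1 : (343:ℕ) ≤ p ^ s := by
      calc (343:ℕ) = 7 ^ 3 := by norm_num
        _ ≤ p ^ 3 := Nat.pow_le_pow_left (by omega) 3
        _ ≤ p ^ s := Nat.pow_le_pow_right (by omega) (by omega)
    omega
  have hm12 : m = 1 ∨ m = 2 := by omega
  have hs12 : s = 1 ∨ s = 2 := by omega
  rcases hm12 with rfl | rfl
  · -- m = 1
    rw [pow_one] at h2
    have hq' : q = z * (z + 2) / 240 := by rw [h2]; omega
    rcases hs12 with rfl | rfl
    · -- s = 1, r = 2
      rw [pow_one] at hz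
      obtain rfl : z = p - 1 := by omega
      clear hP hps hy heq hqd hyp hqle hqm242
      have hp241 : p ≤ 241 := by omega
      interval_cases p <;>
        first
          | omega
          | (norm_num at hp; done)
          | (right; refine ⟨rfl, rfl, ?_, rfl⟩; omega)
          | (rw [hq'] at hq hq1; first | (norm_num at hq; done) | (norm_num at hq1; done) | (norm_num at hq hq1; done))
    · -- s = 2, r = 4
      rw [pow_two] at hz
      have hp15 : p ≤ 15 := by
        by_contra hc
        have h256 : 16 * 16 ≤ p * p := Nat.mul_le_mul (by omega) (by omega)
        have := le_trans h256 (le_of_eq hz)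
        omega
      obtain rfl : z = p * p - 1 := by rw [hz]; omega
      clear hP hps hy heq hqd hyp hqle hqm242
      interval_cases p <;>
        first
          | omega
          | (norm_num at hp; done)
          | (left; refine ⟨rfl, rfl, ?_, rfl⟩; omega)
          | (rw [hq'] at hq hq1; first | (norm_num at hq; done) | (norm_num at hq1; done) | (norm_num at hq hq1; done))
  · -- m = 2 : no solutions
    exfalso
    rw [pow_two] at h2 hqm242
    have hq15 : q ≤ 15 := by
      by_contra hc
      have h256 : 16 * 16 ≤ q * q := Nat.mul_le_mul (by omega) (by omega)
      have := le_trans h256 hqm242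
      omega
    clear hP hps hy heq hqd hz hqle
    interval_cases q <;> interval_cases z <;> omega


set_option maxHeartbeats 1000000 in
lemma dio240_241 (q r m : ℕ) (hq : q.Prime)
    (hq5 : 5 < q) (hr : 1 < r) (hm : 0 < m)
    (hq1 : (q - 1) ∣ 240) (hqnd : ¬ q ∣ 240)
    (hP : 241 ^ r = 240 * q ^ m + 1) (hro : r % 2 = 1) : False := by
  have hdq : q ∣ q ^ m := dvd_pow_self q hm.ne'
  have hq241 : q ≤ 241 := by
    have := Nat.le_of_dvd (by norm_num) hq1
    omega
  have hq7 : 7 ≤ q := by rcases hq.eq_two_or_odd with h | h <;> omega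
  interval_cases q <;>
    first
      | (revert hq1; decide)
      | (revert hq; norm_num)
      | skip
  -- q = 7
  · have h1 : 241 ^ r % 7 = 1 := by omega
    rw [pow_mod_cycle 241 r 6 7 (by norm_num) (by norm_num)] at h1
    have h3 : ∀ e < 6, e % 2 = 1 → 241 ^ e % 7 ≠ 1 := by decide
    exact h3 (r % 6) (by omega) (by omega) h1
  -- q = 11
  · have h1 : 241 ^ r % 11 = 1 := by omega
    rw [pow_mod_cycle 241 r 10 11 (by norm_num) (by norm_num)] at h1
    have h3 : ∀ e < 10, e % 2 = 1 → 241 ^ e % 11 ≠ 1 := by decide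
    exact h3 (r % 10) (by omega) (by omega) h1
  -- q = 13
  · have h1 : 241 ^ r % 13 = 1 := by omega
    rw [pow_mod_cycle 241 r 12 13 (by norm_num) (by norm_num)] at h1
    have h3 : ∀ e < 12, e % 2 = 1 → 241 ^ e % 13 ≠ 1 := by decide
    exact h3 (r % 12) (by omega) (by omega) h1
  -- q = 17
  · have h1 : 241 ^ r % 17 = 1 := by omega
    rw [pow_mod_cycle 241 r 16 17 (by norm_num) (by norm_num)] at h1
    have h3 : ∀ e < 16, e % 2 = 1 → 241 ^ e % 17 ≠ 1 := by decide
    exact h3 (r % 16) (by omega) (by omega) h1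
  -- q = 31
  · have h1 : 241 ^ r % 31 = 1 := by omega
    rw [pow_mod_cycle 241 r 30 31 (by norm_num) (by norm_num)] at h1
    have h3 : ∀ e < 30, e % 2 = 1 → 241 ^ e % 31 ≠ 1 := by decide
    exact h3 (r % 30) (by omega) (by omega) h1
  -- q = 41
  · have h1 : 241 ^ r % 41 = 1 := by omega
    rw [pow_mod_cycle 241 r 40 41 (by norm_num) (by norm_num)] at h1
    have h3 : ∀ e < 40, e % 2 = 1 → 241 ^ e % 41 ≠ 1 := by decide
    exact h3 (r % 40) (by omega) (by omega) h1
  -- q = 61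
  · have h1 : 241 ^ r % 61 = 1 := by omega
    have h2 : 241 ^ r % 61 = 241 ^ (r % 60) % 61 :=
      pow_mod_cycle 241 r 60 61 (by norm_num) (by norm_num)
    have h3 : ∀ e < 60, e % 2 = 1 → 241 ^ e % 61 = 1 → e % 5 = 0 := by decide
    have hr5 : r % 5 = 0 := by
      have := h3 (r % 60) (by omega) (by omega) (by omega)
      omega
    set S := ∑ i ∈ Finset.range r, 241 ^ i with hSdef
    have hgeo : 240 * S = 241 ^ r - 1 := by
      have hz : (∑ i ∈ Finset.range r, (241:ℤ) ^ i) * (241 - 1) = 241 ^ r - 1 :=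
        geom_sum_mul 241 r
      have hcast : ((240 * S : ℕ) : ℤ) = ((241 ^ r - 1 : ℕ) : ℤ) := by
        push_cast [hSdef]
        rw [Nat.cast_sub (Nat.one_le_pow _ _ (by norm_num))]
        push_cast
        linarith [hz]
      exact_mod_cast hcast
    have hS61 : S = 61 ^ m := by omega
    have hSmod : S % 5 = r % 5 := by
      rw [hSdef, Finset.sum_nat_mod]
      have : ∀ i ∈ Finset.range r, 241 ^ i % 5 = 1 := by
        intro i _
        rw [Nat.pow_mod]
        norm_num
      rw [Finset.sum_congr rfl this, Finset.sum_const, Finset.card_range, smul_eq_mul, mul_one]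
    have h61m : 61 ^ m % 5 = 1 := by rw [Nat.pow_mod]; norm_num
    omega
  -- q = 241
  · have h2 : 241 ∣ 241 ^ r := dvd_pow_self 241 (by omega : r ≠ 0)
    omega

lemma dio240_lte (p q r m j : ℕ) (hp : p.Prime) (hq : q.Prime)
    (hp5 : 5 < p) (hq5 : 5 < q) (hr : 1 < r)
    (hqnd : ¬ q ∣ 240)
    (hP : p ^ r = 240 * q ^ m + 1)
    (hu : p - 1 = 240 * q ^ j) (hjm : j ≤ m) (hj : 0 < j) : False := by
  haveI : Fact q.Prime := ⟨hq⟩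
  have hqodd : Odd q := hq.odd_of_ne_two (by omega)
  have hqdp1 : q ∣ p - 1 := by rw [hu]; exact Dvd.dvd.mul_left (dvd_pow_self q hj.ne') 240
  have hqnp : ¬ q ∣ p := by
    intro h
    have := (Nat.prime_dvd_prime_iff_eq hq hp).mp h
    subst this
    have := Nat.le_of_dvd (by omega) hqdp1
    omega
  have hlte := padicValNat.pow_sub_pow (x := p) (y := 1) hqodd (by omega)
      (by simpa using hqdp1) hqnp (by omega : r ≠ 0)
  rw [one_pow] at hlte
  have hv1 : padicValNat q (p ^ r - 1) = m := by
    have h1 : p ^ r - 1 = 240 * q ^ m := by omega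
    rw [h1, padicValNat.mul (by norm_num) (by positivity), padicValNat.prime_pow,
      padicValNat.eq_zero_of_not_dvd hqnd, zero_add]
  have hv2 : padicValNat q (p - 1) = j := by
    rw [hu, padicValNat.mul (by norm_num) (by positivity), padicValNat.prime_pow,
      padicValNat.eq_zero_of_not_dvd hqnd, zero_add]
  rw [hv1, hv2] at hlte
  have hdr : q ^ (m - j) ∣ r := by
    have := pow_padicValNat_dvd (p := q) (n := r)
    rwa [show padicValNat q r = m - j by omega] at this
  have hler : q ^ (m - j) ≤ r := Nat.le_of_dvd (by omega) hdr
  have hpr : p * r ≤ p ^ r := by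
    have h1 : r - 1 < p ^ (r - 1) := Nat.lt_pow_self (by omega)
    calc p * r ≤ p * p ^ (r - 1) := Nat.mul_le_mul_left p (by omega)
      _ = p ^ (r - 1 + 1) := by rw [pow_succ, mul_comm]
      _ = p ^ r := by congr 1; omega
  have hsplit : q ^ m = q ^ j * q ^ (m - j) := by rw [← pow_add]; congr 1; omega
  have hle : 240 * q ^ m ≤ (p - 1) * r := by
    calc 240 * q ^ m = (240 * q ^ j) * q ^ (m - j) := by rw [hsplit]; ring
      _ ≤ (240 * q ^ j) * r := Nat.mul_le_mul_left _ hler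
      _ = (p - 1) * r := by rw [hu]
  have hfin : (p - 1) * r + r = p * r := by
    have hpp : p - 1 + 1 = p := by omega
    calc (p - 1) * r + r = (p - 1 + 1) * r := by ring
      _ = p * r := by rw [hpp]
  omega

set_option maxHeartbeats 1000000 in
lemma dio240_odd (p q r m : ℕ) (hp : p.Prime) (hq : q.Prime)
    (hp5 : 5 < p) (hq5 : 5 < q) (hr : 1 < r) (hm : 0 < m)
    (hq1 : (q - 1) ∣ 240) (hqnd : ¬ q ∣ 240)
    (heq : p ^ r - 1 = 240 * q ^ m) (hro : r % 2 = 1) : False := by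
  have hps : 0 < p ^ r := pow_pos (by omega) r
  have hP : p ^ r = 240 * q ^ m + 1 := by omega
  have hp2 : p % 2 = 1 := by rcases hp.eq_two_or_odd with h | h <;> omega
  have hp3 : ¬ (3 ∣ p) := by
    intro h; rcases (Nat.Prime.eq_one_or_self_of_dvd hp 3 h) with h' | h' <;> omega
  have hp5' : ¬ (5 ∣ p) := by
    intro h; rcases (Nat.Prime.eq_one_or_self_of_dvd hp 5 h) with h' | h' <;> omega
  have h16 : p % 16 = 1 := by
    refine odd_pow_mod p r 16 (by norm_num) hro (by omega) ?_ (by decide)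
    have hlt : p % 16 < 16 := Nat.mod_lt _ (by norm_num)
    have hodd : p % 16 % 2 = 1 := by rw [Nat.mod_mod_of_dvd _ (by norm_num : 2 ∣ 16)]; exact hp2
    have : ∀ a < 16, a % 2 = 1 → a ^ 4 % 16 = 1 := by decide
    exact this _ hlt hodd
  have h3 : p % 3 = 1 := by
    refine odd_pow_mod p r 3 (by norm_num) hro (by omega) ?_ (by decide)
    have hlt : p % 3 < 3 := Nat.mod_lt _ (by norm_num)
    have hne : p % 3 ≠ 0 := fun h => hp3 (Nat.dvd_of_mod_eq_zero h)
    have : ∀ a < 3, a ≠ 0 → a ^ 4 % 3 = 1 := by decide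
    exact this _ hlt hne
  have h5 : p % 5 = 1 := by
    refine odd_pow_mod p r 5 (by norm_num) hro (by omega) ?_ (by decide)
    have hlt : p % 5 < 5 := Nat.mod_lt _ (by norm_num)
    have hne : p % 5 ≠ 0 := fun h => hp5' (Nat.dvd_of_mod_eq_zero h)
    have : ∀ a < 5, a ≠ 0 → a ^ 4 % 5 = 1 := by decide
    exact this _ hlt hne
  have h240 : p % 240 = 1 := by omega
  obtain ⟨u, hu⟩ : (240 : ℕ) ∣ p - 1 := ⟨(p - 1) / 240, by omega⟩
  have hdvd : p - 1 ∣ p ^ r - 1 := by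
    have := Nat.sub_dvd_pow_sub_pow p 1 r
    simpa using this
  have hudvd : u ∣ q ^ m := by
    rw [heq, hu] at hdvd
    exact (mul_dvd_mul_iff_left (by norm_num : (240:ℕ) ≠ 0)).mp hdvd
  obtain ⟨j, hjm, rfl⟩ := (Nat.dvd_prime_pow hq).mp hudvd
  rcases Nat.eq_zero_or_pos j with rfl | hj
  · rw [pow_zero, mul_one] at hu
    obtain rfl : p = 241 := by omega
    exact dio240_241 q r m hq hq5 hr hm hq1 hqnd hP hro
  · exact dio240_lte p q r m j hp hq hp5 hq5 hr hqnd hP hu hjm hj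

/-- Solutions of `p^r - 1 = 240 q^m` for primes `p, q > 5` with `q - 1 ∣ 240`, `q ∤ 240`,
`r > 1` and `m ≥ 1`. -/
theorem dio240 (p q r m : ℕ) (hp : p.Prime) (hq : q.Prime)
    (hp5 : 5 < p) (hq5 : 5 < q) (hr : 1 < r) (hm : 0 < m)
    (hq1 : (q - 1) ∣ 240) (hqnd : ¬ q ∣ 240)
    (heq : p ^ r - 1 = 240 * q ^ m) :
    (p = 11 ∧ r = 4 ∧ q = 61 ∧ m = 1) ∨ (p = 41 ∧ r = 2 ∧ q = 7 ∧ m = 1) := by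
  rcases Nat.even_or_odd r with ⟨s, rfl⟩ | hodd
  · exact dio240_even p q s m hp hq hp5 hq5 hr hm hq1 hqnd heq
  · exact absurd (dio240_odd p q r m hp hq hp5 hq5 hr hm hq1 hqnd heq
      (Nat.odd_iff.mp hodd)) not_false
end

section
/- If x, y, u, v are non-negative integers such that 2^x·3^y - 2^u·3^v = 1, then (x, y, u, v) is one of (1,0,0,0), (0,1,1,0), (2,0,0,1), (0,2,3,0). -/
private lemma pow3_mod80 (y : ℕ) :
    3 ^ y % 80 = 1 ∨ 3 ^ y % 80 = 3 ∨ 3 ^ y % 80 = 9 ∨ 3 ^ y % 80 = 27 := by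
  have hy : 3 ^ y = (3 ^ 4) ^ (y / 4) * 3 ^ (y % 4) := by
    rw [← pow_mul, ← pow_add, Nat.div_add_mod]
  rw [hy, Nat.mul_mod, Nat.pow_mod]
  have : y % 4 = 0 ∨ y % 4 = 1 ∨ y % 4 = 2 ∨ y % 4 = 3 := by omega
  rcases this with h | h | h | h <;> rw [h] <;> norm_num

private lemma pow3_mod8 (v : ℕ) : 3 ^ v % 8 = 1 ∨ 3 ^ v % 8 = 3 := by
  have hv : 3 ^ v = (3 ^ 2) ^ (v / 2) * 3 ^ (v % 2) := by
    rw [← pow_mul, ← pow_add, Nat.div_add_mod]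
  rw [hv, Nat.mul_mod, Nat.pow_mod]
  have : v % 2 = 0 ∨ v % 2 = 1 := by omega
  rcases this with h | h <;> rw [h] <;> norm_num

private lemma pow2_mod5 (k : ℕ) :
    2 ^ k % 5 = 1 ∨ 2 ^ k % 5 = 2 ∨ 2 ^ k % 5 = 4 ∨ 2 ^ k % 5 = 3 := by
  have hk : 2 ^ k = (2 ^ 4) ^ (k / 4) * 2 ^ (k % 4) := by
    rw [← pow_mul, ← pow_add, Nat.div_add_mod]
  rw [hk, Nat.mul_mod, Nat.pow_mod]
  have : k % 4 = 0 ∨ k % 4 = 1 ∨ k % 4 = 2 ∨ k % 4 = 3 := by omega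
  rcases this with h | h | h | h <;> rw [h] <;> norm_num

private lemma pow3_eq_one {y : ℕ} (h : 3 ^ y = 1) : y = 0 :=
  Nat.pow_right_injective (by norm_num) (h.trans (pow_zero 3).symm)

private lemma pow3_eq_three {y : ℕ} (h : 3 ^ y = 3) : y = 1 :=
  Nat.pow_right_injective (by norm_num) (h.trans (pow_one 3).symm)

private lemma pow3_eq_nine {y : ℕ} (h : 3 ^ y = 9) : y = 2 :=
  Nat.pow_right_injective (show 2 ≤ 3 by norm_num) (show 3 ^ y = 3 ^ 2 by omega)

private lemma pow2_eq {x : ℕ} (n : ℕ) (h : 2 ^ x = 2 ^ n) : x = n :=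
  Nat.pow_right_injective (by norm_num) h

/-- `2^x = 3^v + 1` has only the solutions `(1,0)` and `(2,1)`. -/
private lemma solve_two_pow (x v : ℕ) (h : 2 ^ x = 3 ^ v + 1) :
    (x = 1 ∧ v = 0) ∨ (x = 2 ∧ v = 1) := by
  by_cases hx : 3 ≤ x
  · exfalso
    have h8 : 2 ^ x % 8 = 0 := by
      obtain ⟨k, rfl⟩ : ∃ k, x = k + 3 := ⟨x - 3, by omega⟩
      rw [pow_add]
      simp [Nat.mul_mod]
    have := pow3_mod8 v
    omega
  · interval_cases x
    · exfalso; have := pow_pos (show 0 < 3 by norm_num) v; omega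
    · left
      have hv : 3 ^ v = 1 := by omega
      exact ⟨rfl, pow3_eq_one hv⟩
    · right
      have hv : 3 ^ v = 3 := by norm_num at h; omega
      exact ⟨rfl, pow3_eq_three hv⟩

/-- `3^y = 2^u + 1` has only the solutions `(1,1)` and `(2,3)`. -/
private lemma solve_three_pow (y u : ℕ) (h : 3 ^ y = 2 ^ u + 1) :
    (y = 1 ∧ u = 1) ∨ (y = 2 ∧ u = 3) := by
  by_cases hu : 4 ≤ u
  · exfalso
    have h80 : 2 ^ u % 80 = 16 ∨ 2 ^ u % 80 = 32 ∨ 2 ^ u % 80 = 64 ∨ 2 ^ u % 80 = 48 := by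
      obtain ⟨k, rfl⟩ : ∃ k, u = k + 4 := ⟨u - 4, by omega⟩
      rw [pow_add]
      have h5 := pow2_mod5 k
      have h16 : 2 ^ k * 2 ^ 4 = (2 ^ k % 5) * 16 + (2 ^ k / 5) * 80 := by
        have := Nat.div_add_mod (2 ^ k) 5
        ring_nf
        omega
      rw [h16]
      omega
    have := pow3_mod80 y
    omega
  · interval_cases u
    · exfalso
      have := pow3_mod80 y
      have h2 : 3 ^ y = 2 := by norm_num at h; omega
      omega
    · left
      have hy : 3 ^ y = 3 := by norm_num at h; omega
      exact ⟨pow3_eq_three hy, rfl⟩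
    · exfalso
      have := pow3_mod80 y
      have h5 : 3 ^ y = 5 := by norm_num at h; omega
      omega
    · right
      have hy : 3 ^ y = 9 := by norm_num at h; omega
      exact ⟨pow3_eq_nine hy, rfl⟩

/-- The only pairs of consecutive `{2,3}`-numbers: if `2^x 3^y - 2^u 3^v = 1` then
`(x,y,u,v)` is one of `(1,0,0,0)`, `(0,1,1,0)`, `(2,0,0,1)`, `(0,2,3,0)`. -/
theorem consecutive_two_three_numbers (x y u v : ℕ)
    (h : 2 ^ x * 3 ^ y - 2 ^ u * 3 ^ v = 1) :
    (x, y, u, v) = (1, 0, 0, 0) ∨ (x, y, u, v) = (0, 1, 1, 0) ∨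
      (x, y, u, v) = (2, 0, 0, 1) ∨ (x, y, u, v) = (0, 2, 3, 0) := by
  have heq : 2 ^ x * 3 ^ y = 2 ^ u * 3 ^ v + 1 := by omega
  -- not both x, u positive (parity)
  have hxu : x = 0 ∨ u = 0 := by
    by_contra hc
    push_neg at hc
    obtain ⟨x', rfl⟩ : ∃ x', x = x' + 1 := ⟨x - 1, by omega⟩
    obtain ⟨u', rfl⟩ : ∃ u', u = u' + 1 := ⟨u - 1, by omega⟩
    have h1 : 2 ^ (x' + 1) * 3 ^ y = 2 * (2 ^ x' * 3 ^ y) := by ring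
    have h2 : 2 ^ (u' + 1) * 3 ^ v = 2 * (2 ^ u' * 3 ^ v) := by ring
    omega
  -- not both y, v positive (mod 3)
  have hyv : y = 0 ∨ v = 0 := by
    by_contra hc
    push_neg at hc
    obtain ⟨y', rfl⟩ : ∃ y', y = y' + 1 := ⟨y - 1, by omega⟩
    obtain ⟨v', rfl⟩ : ∃ v', v = v' + 1 := ⟨v - 1, by omega⟩
    have h1 : 2 ^ x * 3 ^ (y' + 1) = 3 * (2 ^ x * 3 ^ y') := by ring
    have h2 : 2 ^ u * 3 ^ (v' + 1) = 3 * (2 ^ u * 3 ^ v') := by ring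
    omega
  rcases hxu with hx0 | hu0 <;> rcases hyv with hy0 | hv0
  · -- x = 0, y = 0 : impossible
    exfalso
    have := Nat.mul_pos (pow_pos (show 0 < 2 by norm_num) u) (pow_pos (show 0 < 3 by norm_num) v)
    subst hx0 hy0
    simp at heq
  · -- x = 0, v = 0 : 3^y = 2^u + 1
    subst hx0 hv0
    simp at heq
    rcases solve_three_pow y u heq with ⟨hy, hu⟩ | ⟨hy, hu⟩
    · right; left; simp [hy, hu]
    · right; right; right; simp [hy, hu]
  · -- u = 0, y = 0 : 2^x = 3^v + 1
    subst hu0 hy0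
    simp at heq
    rcases solve_two_pow x v heq with ⟨hx, hv⟩ | ⟨hx, hv⟩
    · left; simp [hx, hv]
    · right; right; left; simp [hx, hv]
  · -- u = 0, v = 0 : 2^x * 3^y = 2
    subst hu0 hv0
    simp at heq
    have hy : y = 0 := by
      rcases y with _ | y'
      · rfl
      · exfalso
        have h1 : 2 ^ x * 3 ^ (y' + 1) = 3 * (2 ^ x * 3 ^ y') := by ring
        omega
    subst hy
    simp at heq
    have hx : x = 1 := pow2_eq 1 (by rw [heq]; norm_num)
    left
    simp [hx]
end

section
/- If p is a positive integer such that both p - 1 and p + 1 are {2,3}-numbers (every prime divisor of each is 2 or 3), then p ∈ {2, 3, 5, 7, 17}. -/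
lemma two_pow_mod9 (x : ℕ) : 2^x % 9 = 2^(x % 6) % 9 := by
  conv_lhs => rw [← Nat.div_add_mod x 6]
  rw [pow_add, pow_mul, Nat.mul_mod, Nat.pow_mod]
  norm_num

lemma three_pow_mod16 (b : ℕ) : 3^b % 16 = 3^(b % 4) % 16 := by
  conv_lhs => rw [← Nat.div_add_mod b 4]
  rw [pow_add, pow_mul, Nat.mul_mod, Nat.pow_mod]
  norm_num

lemma L1 (b d : ℕ) (h : 3^b + 2 = 3^d) : b = 0 ∧ d = 1 := by
  have hd0 : d ≠ 0 := by
    rintro rfl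
    have : 1 ≤ 3^b := Nat.one_le_pow _ _ (by norm_num)
    simp only [pow_zero] at h; omega
  have hb : b = 0 := by
    by_contra hb
    obtain ⟨k, hk⟩ := dvd_pow_self 3 hb
    obtain ⟨m, hm⟩ := dvd_pow_self 3 hd0
    omega
  subst hb
  norm_num at h
  have h3 : (3:ℕ)^1 = 3^d := by omega
  have := Nat.pow_right_injective (by norm_num : 2 ≤ 3) h3
  exact ⟨rfl, this.symm⟩

lemma L2 (x b : ℕ) (h : 2^x = 3^b + 1) : (x = 1 ∧ b = 0) ∨ (x = 2 ∧ b = 1) := by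
  by_cases hb : b ≤ 1
  · interval_cases b
    · left
      refine ⟨?_, rfl⟩
      have hh : (2:ℕ)^x = 2^1 := by norm_num at h ⊢; omega
      exact Nat.pow_right_injective (le_refl 2) hh
    · right
      refine ⟨?_, rfl⟩
      have hh : (2:ℕ)^x = 2^2 := by norm_num at h ⊢; omega
      exact Nat.pow_right_injective (le_refl 2) hh
  · exfalso
    push_neg at hb
    obtain ⟨k, hk⟩ : (9:ℕ) ∣ 3^b := by
      calc (9:ℕ) = 3^2 := by norm_num
        _ ∣ 3^b := pow_dvd_pow 3 hb
    have hm : 2^x % 9 = 1 := by omega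
    rw [two_pow_mod9] at hm
    have hr : 6 ∣ x := by
      rw [Nat.dvd_iff_mod_eq_zero]
      have h6 : x % 6 < 6 := Nat.mod_lt _ (by norm_num)
      generalize x % 6 = r at hm h6 ⊢
      interval_cases r <;> first | rfl | norm_num at hm
    obtain ⟨q, hq⟩ := hr
    have h63 : (63:ℕ) ∣ 2^x - 1 := by
      have hd := Nat.sub_dvd_pow_sub_pow 64 1 q
      have h64 : (2:ℕ)^x = 64^q := by
        rw [hq, pow_mul]; norm_num
      simpa [h64] using hd
    have h7 : (7:ℕ) ∣ 3^b := by
      have h1 : 1 ≤ 2^x := Nat.one_le_two_pow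
      have heq : 2^x - 1 = 3^b := by omega
      rw [← heq]
      exact dvd_trans (by norm_num) h63
    have := Nat.Prime.dvd_of_dvd_pow (p := 7) (by norm_num) h7
    omega

lemma L3 (x b : ℕ) (h : 2^x + 1 = 3^b) : (x = 1 ∧ b = 1) ∨ (x = 3 ∧ b = 2) := by
  by_cases hx : x ≤ 3
  · have hble : b ≤ 2 := by
      by_contra hb
      have h3 : (3:ℕ)^3 ≤ 3^b := Nat.pow_le_pow_right (by norm_num) (by omega)
      have h2 : (2:ℕ)^x ≤ 2^3 := Nat.pow_le_pow_right (by norm_num) hx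
      norm_num at h3 h2; omega
    interval_cases x <;> interval_cases b <;> revert h <;> decide
  · exfalso
    push_neg at hx
    obtain ⟨k, hk⟩ : (16:ℕ) ∣ 2^x := by
      calc (16:ℕ) = 2^4 := by norm_num
        _ ∣ 2^x := pow_dvd_pow 2 (by omega)
    have hm : 3^b % 16 = 1 := by omega
    rw [three_pow_mod16] at hm
    have hr : 4 ∣ b := by
      rw [Nat.dvd_iff_mod_eq_zero]
      have h4 : b % 4 < 4 := Nat.mod_lt _ (by norm_num)
      generalize b % 4 = r at hm h4 ⊢
      interval_cases r <;> first | rfl | norm_num at hm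
    obtain ⟨q, hq⟩ := hr
    have h80 : (80:ℕ) ∣ 3^b - 1 := by
      have hd := Nat.sub_dvd_pow_sub_pow 81 1 q
      have h81 : (3:ℕ)^b = 81^q := by
        rw [hq, pow_mul]; norm_num
      simpa [h81] using hd
    have h5 : (5:ℕ) ∣ 2^x := by
      have h1 : 1 ≤ 3^b := Nat.one_le_pow _ _ (by norm_num)
      have heq : 3^b - 1 = 2^x := by omega
      rw [← heq]
      exact dvd_trans (by norm_num) h80
    have := Nat.Prime.dvd_of_dvd_pow (p := 5) (by norm_num) h5
    omega

lemma smooth23 : ∀ n, 0 < n → (∀ l : ℕ, l.Prime → l ∣ n → l = 2 ∨ l = 3) →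
    ∃ a b : ℕ, n = 2^a * 3^b := by
  intro n
  induction n using Nat.strong_induction_on with
  | _ n ih =>
    intro hn h
    by_cases h1 : n = 1
    · exact ⟨0, 0, by simp [h1]⟩
    obtain ⟨q, hq, hqd⟩ := Nat.exists_prime_and_dvd h1
    obtain ⟨m, hm⟩ := hqd
    have hm0 : 0 < m := by
      rcases Nat.eq_zero_or_pos m with rfl | hpos
      · simp at hm; omega
      · exact hpos
    have hq2 := hq.two_le
    have hmlt : m < n := by nlinarith
    obtain ⟨a, b, hab⟩ := ih m hmlt hm0
      (fun l hl hld => h l hl (hm ▸ Dvd.dvd.mul_left hld q))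
    rcases h q hq ⟨m, hm⟩ with rfl | rfl
    · exact ⟨a + 1, b, by rw [hm, hab]; ring⟩
    · exact ⟨a, b + 1, by rw [hm, hab]; ring⟩

/-- If `p` is a positive integer such that both `p - 1` and `p + 1` are `{2,3}`-numbers,
then `p ∈ {2, 3, 5, 7, 17}`. -/
theorem mem_of_pred_succ_two_three_numbers (p : ℕ) (hp : 0 < p)
    (h1 : ∀ l : ℕ, l.Prime → l ∣ p - 1 → l = 2 ∨ l = 3)
    (h2 : ∀ l : ℕ, l.Prime → l ∣ p + 1 → l = 2 ∨ l = 3) :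
    p = 2 ∨ p = 3 ∨ p = 5 ∨ p = 7 ∨ p = 17 := by
  by_cases hp1 : p = 1
  · subst hp1
    have := h1 5 (by norm_num) (by simp)
    omega
  have hp2 : 2 ≤ p := by omega
  obtain ⟨a, b, hab⟩ := smooth23 (p - 1) (by omega) h1
  obtain ⟨c, d, hcd⟩ := smooth23 (p + 1) (by omega) h2
  have h3bodd : 3^b % 2 = 1 := by rw [Nat.pow_mod]; norm_num
  have h3dodd : 3^d % 2 = 1 := by rw [Nat.pow_mod]; norm_num
  rcases Nat.even_or_odd p with he | ho
  · -- p even: both neighbors odd, hence powers of 3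
    have hpev : p % 2 = 0 := Nat.even_iff.mp he
    have ha0 : a = 0 := by
      by_contra ha
      have hdvd : 2 ∣ p - 1 := by
        rw [hab]; exact Dvd.dvd.mul_right (dvd_pow_self 2 ha) _
      obtain ⟨k, hk⟩ := hdvd
      omega
    have hc0 : c = 0 := by
      by_contra hc
      have hdvd : 2 ∣ p + 1 := by
        rw [hcd]; exact Dvd.dvd.mul_right (dvd_pow_self 2 hc) _
      obtain ⟨k, hk⟩ := hdvd
      omega
    subst ha0; subst hc0
    simp only [pow_zero, one_mul] at hab hcd
    have hkey : 3^b + 2 = 3^d := by omega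
    obtain ⟨hb, hd⟩ := L1 b d hkey
    subst hb; subst hd
    norm_num at hab
    omega
  · -- p odd
    have hpodd : p % 2 = 1 := Nat.odd_iff.mp ho
    have hp3 : 3 ≤ p := by omega
    have ha1 : 1 ≤ a := by
      by_contra ha
      have ha0 : a = 0 := by omega
      subst ha0
      simp only [pow_zero, one_mul] at hab
      omega
    have hc1 : 1 ≤ c := by
      by_contra hc
      have hc0 : c = 0 := by omega
      subst hc0
      simp only [pow_zero, one_mul] at hcd
      omega
    have hbd : b = 0 ∨ d = 0 := by
      by_contra hh
      push_neg at hh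
      have d1 : 3 ∣ p - 1 := by
        rw [hab]; exact Dvd.dvd.mul_left (dvd_pow_self 3 hh.1) _
      have d2 : 3 ∣ p + 1 := by
        rw [hcd]; exact Dvd.dvd.mul_left (dvd_pow_self 3 hh.2) _
      obtain ⟨k1, hk1⟩ := d1
      obtain ⟨k2, hk2⟩ := d2
      omega
    have hac : a = 1 ∨ c = 1 := by
      by_contra hh
      push_neg at hh
      have d1 : 4 ∣ p - 1 := by
        rw [hab]
        refine Dvd.dvd.mul_right ?_ _
        calc (4:ℕ) = 2^2 := by norm_num
          _ ∣ 2^a := pow_dvd_pow 2 (by omega)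
      have d2 : 4 ∣ p + 1 := by
        rw [hcd]
        refine Dvd.dvd.mul_right ?_ _
        calc (4:ℕ) = 2^2 := by norm_num
          _ ∣ 2^c := pow_dvd_pow 2 (by omega)
      obtain ⟨k1, hk1⟩ := d1
      obtain ⟨k2, hk2⟩ := d2
      omega
    rcases hbd with hb0 | hd0
    · -- p - 1 = 2^a
      subst hb0
      simp only [pow_zero, mul_one] at hab
      by_cases haa : a = 1
      · subst haa; norm_num at hab; omega
      · have hc1' : c = 1 := by tauto
        subst hc1'
        norm_num [pow_one] at hcd
        have hsplit : (2:ℕ)^a = 2 * 2^(a-1) := by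
          rw [← pow_succ']
          congr 1
          omega
        have hkey : 2^(a-1) + 1 = 3^d := by omega
        rcases L3 (a-1) d hkey with ⟨hx, hdd⟩ | ⟨hx, hdd⟩
        · have hav : a = 2 := by omega
          subst hav
          norm_num at hab
          omega
        · have hav : a = 4 := by omega
          subst hav
          norm_num at hab
          omega
    · -- p + 1 = 2^c
      subst hd0
      simp only [pow_zero, mul_one] at hcd
      rcases hac with ha1' | hc1'
      · subst ha1'
        norm_num [pow_one] at hab
        have hsplit : (2:ℕ)^c = 2 * 2^(c-1) := by
          rw [← pow_succ']
          congr 1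
          omega
        have hkey : (2:ℕ)^(c-1) = 3^b + 1 := by omega
        rcases L2 (c-1) b hkey with ⟨hx, hbb⟩ | ⟨hx, hbb⟩
        · subst hbb
          norm_num at hab
          omega
        · subst hbb
          norm_num at hab
          omega
      · subst hc1'
        norm_num at hcd
        omega
end

section
/- If x, y, u, v are non-negative integers such that 2^x·3^y - 2^u·5^v = 1, then (x, y, u, v) is one of (0,4,4,1), (1,1,0,1), (1,0,0,0), (0,1,1,0), (0,2,3,0). -/
private lemma pow_reduce {M : Type*} [Monoid M] (a : M) (k n : ℕ) (hk : a ^ k = 1) :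
    a ^ n = a ^ (n % k) := by
  conv_lhs => rw [← Nat.div_add_mod n k]
  rw [pow_add, pow_mul, hk, one_pow, one_mul]

private lemma mod_case {k : ℕ} (P : ℕ → Prop) [DecidablePred P] (hk : 0 < k)
    (h : ∀ i, i < k → P i) (n : ℕ) : P (n % k) := h _ (Nat.mod_lt _ hk)

/-- Solutions of `2^x 3^y - 2^u 5^v = 1` in non-negative integers. -/
theorem two_three_minus_two_five (x y u v : ℕ)
    (h : 2 ^ x * 3 ^ y - 2 ^ u * 5 ^ v = 1) :
    (x, y, u, v) = (0, 4, 4, 1) ∨ (x, y, u, v) = (1, 1, 0, 1) ∨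
      (x, y, u, v) = (1, 0, 0, 0) ∨ (x, y, u, v) = (0, 1, 1, 0) ∨
      (x, y, u, v) = (0, 2, 3, 0) := by
  have E : 2 ^ x * 3 ^ y = 2 ^ u * 5 ^ v + 1 := by
    rcases le_or_gt (2 ^ u * 5 ^ v) (2 ^ x * 3 ^ y) with hle | hlt
    · have := (Nat.sub_eq_iff_eq_add hle).mp h
      rw [this]; ring
    · rw [Nat.sub_eq_zero_of_le hlt.le] at h; exact absurd h (by norm_num)
  clear h
  match x with
  | 0 =>
    -- 3^y = 2^u * 5^v + 1
    rw [pow_zero, one_mul] at E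
    match v with
    | 0 =>
      rw [pow_zero, mul_one] at E
      -- 3^y = 2^u + 1
      match y with
      | 0 => have := pow_pos (by norm_num : 0 < 2) u; omega
      | 1 =>
        have hu : u = 1 := by
          have h2 : (2:ℕ) ^ u = 2 ^ 1 := by omega
          exact Nat.pow_right_injective (by norm_num) h2
        subst hu; tauto
      | 2 =>
        have hu : u = 3 := by
          have h2 : (2:ℕ) ^ u = 2 ^ 3 := by omega
          exact Nat.pow_right_injective (by norm_num) h2
        subst hu; tauto
      | (t+3) =>
        exfalso
        have c27 := congrArg (Nat.cast : ℕ → ZMod 27) E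
        push_cast at c27
        rw [pow_add, (by decide : (3 : ZMod 27) ^ 3 = 0), mul_zero] at c27
        rw [pow_reduce (2 : ZMod 27) 18 u (by decide)] at c27
        have hu9 : u % 18 = 9 :=
          mod_case (fun i => (0 : ZMod 27) = (2:ZMod 27) ^ i + 1 → i = 9)
            (by norm_num) (by decide) u c27
        have c19 := congrArg (Nat.cast : ℕ → ZMod 19) E
        push_cast at c19
        rw [pow_reduce (2 : ZMod 19) 18 u (by decide), hu9,
            pow_reduce (3 : ZMod 19) 18 (t+3) (by decide)] at c19
        exact mod_case (fun i => ¬ ((3:ZMod 19) ^ i = (2:ZMod 19) ^ 9 + 1))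
          (by norm_num) (by decide) (t+3) c19
    | 1 =>
      -- 3^y = 2^u * 5 + 1
      rw [pow_one] at E
      -- 4 ∣ y from mod 5
      have c5 := congrArg (Nat.cast : ℕ → ZMod 5) E
      push_cast at c5
      rw [(by decide : (5 : ZMod 5) = 0), mul_zero, zero_add,
          pow_reduce (3 : ZMod 5) 4 y (by decide)] at c5
      have hy4 : y % 4 = 0 :=
        mod_case (fun i => (3:ZMod 5) ^ i = 1 → i = 0) (by norm_num) (by decide) y c5
      obtain ⟨t, rfl⟩ : 4 ∣ y := Nat.dvd_of_mod_eq_zero hy4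
      -- u ≥ 4 from mod 16
      have c16 := congrArg (Nat.cast : ℕ → ZMod 16) E
      push_cast at c16
      rw [pow_mul, (by decide : (3 : ZMod 16) ^ 4 = 1), one_pow] at c16
      have hz16 : (2 : ZMod 16) ^ u * 5 = 0 := by linear_combination -c16
      have hu4 : 4 ≤ u := by
        by_contra hu
        push_neg at hu
        interval_cases u <;> revert hz16 <;> decide
      -- u ≤ 4 from mod 32 and mod 41
      have hu5 : ¬ 5 ≤ u := by
        intro hu
        obtain ⟨w, rfl⟩ : ∃ w, u = w + 5 := ⟨u - 5, by omega⟩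
        have c32 := congrArg (Nat.cast : ℕ → ZMod 32) E
        push_cast at c32
        rw [pow_add, (by decide : (2 : ZMod 32) ^ 5 = 0), mul_zero, zero_mul, zero_add,
            pow_mul, pow_reduce ((3 : ZMod 32) ^ 4) 2 t (by decide)] at c32
        have ht2 : t % 2 = 0 :=
          mod_case (fun i => ((3:ZMod 32) ^ 4) ^ i = 1 → i = 0) (by norm_num) (by decide) t c32
        obtain ⟨s, rfl⟩ : 2 ∣ t := Nat.dvd_of_mod_eq_zero ht2
        have c41 := congrArg (Nat.cast : ℕ → ZMod 41) E
        push_cast at c41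
        rw [show 4 * (2 * s) = 8 * s by ring, pow_mul,
            (by decide : (3 : ZMod 41) ^ 8 = 1), one_pow] at c41
        have hz41 : (2 : ZMod 41) ^ (w+5) * 5 = 0 := by linear_combination -c41
        have h2 : (2:ZMod 41) ≠ 0 := by decide
        have h5 : (5:ZMod 41) ≠ 0 := by decide
        haveI : Fact (Nat.Prime 41) := ⟨by norm_num⟩
        exact absurd hz41 (mul_ne_zero (pow_ne_zero _ h2) h5)
      have hu : u = 4 := by omega
      subst hu
      have hy : 3 ^ (4 * t) = 3 ^ 4 := by norm_num at E ⊢; omega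
      have ht : 4 * t = 4 := Nat.pow_right_injective (by norm_num) hy
      have : t = 1 := by omega
      subst this
      norm_num
    | (w+2) =>
      -- v ≥ 2 : contradiction mod 25 then mod 11
      exfalso
      have c25 := congrArg (Nat.cast : ℕ → ZMod 25) E
      push_cast at c25
      rw [pow_add, (by decide : (5 : ZMod 25) ^ 2 = 0), mul_zero, mul_zero, zero_add,
          pow_reduce (3 : ZMod 25) 20 y (by decide)] at c25
      have hy20 : y % 20 = 0 :=
        mod_case (fun i => (3:ZMod 25) ^ i = 1 → i = 0) (by norm_num) (by decide) y c25
      obtain ⟨s, rfl⟩ : 20 ∣ y := Nat.dvd_of_mod_eq_zero hy20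
      have c11 := congrArg (Nat.cast : ℕ → ZMod 11) E
      push_cast at c11
      rw [pow_mul, (by decide : (3 : ZMod 11) ^ 20 = 1), one_pow] at c11
      have hz11 : (2 : ZMod 11) ^ u * 5 ^ (w+2) = 0 := by linear_combination -c11
      have h2 : (2:ZMod 11) ≠ 0 := by decide
      have h5 : (5:ZMod 11) ≠ 0 := by decide
      haveI : Fact (Nat.Prime 11) := ⟨by norm_num⟩
      exact absurd hz11 (mul_ne_zero (pow_ne_zero _ h2) (pow_ne_zero _ h5))
  | 1 =>
    -- 2 * 3^y = 2^u * 5^v + 1 ; u must be 0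
    rw [pow_one] at E
    match u with
    | (b+1) =>
      exfalso
      have h1 : 2 ∣ 2 * 3 ^ y := Dvd.intro _ rfl
      have h2 : 2 ∣ 2 ^ (b+1) * 5 ^ v :=
        dvd_mul_of_dvd_left (dvd_pow_self 2 (Nat.succ_ne_zero b)) _
      omega
    | 0 =>
      rw [pow_zero, one_mul] at E
      -- 2 * 3^y = 5^v + 1
      match y with
      | 0 =>
        have hv : v = 0 := by
          have h5 : (5:ℕ) ^ v = 5 ^ 0 := by rw [pow_zero] at E ⊢; omega
          exact Nat.pow_right_injective (by norm_num) h5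
        subst hv; tauto
      | 1 =>
        have hv : v = 1 := by
          have h5 : (5:ℕ) ^ v = 5 ^ 1 := by norm_num at E ⊢; omega
          exact Nat.pow_right_injective (by norm_num) h5
        subst hv; tauto
      | (t+2) =>
        exfalso
        have c9 := congrArg (Nat.cast : ℕ → ZMod 9) E
        push_cast at c9
        rw [pow_add, (by decide : (3 : ZMod 9) ^ 2 = 0), mul_zero, mul_zero,
            pow_reduce (5 : ZMod 9) 6 v (by decide)] at c9
        have hv3 : v % 6 = 3 :=
          mod_case (fun i => (0:ZMod 9) = (5:ZMod 9) ^ i + 1 → i = 3)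
            (by norm_num) (by decide) v c9
        have c7 := congrArg (Nat.cast : ℕ → ZMod 7) E
        push_cast at c7
        rw [pow_reduce (5 : ZMod 7) 6 v (by decide), hv3,
            pow_reduce (3 : ZMod 7) 6 (t+2) (by decide)] at c7
        exact mod_case (fun i => ¬ (2 * (3:ZMod 7) ^ i = (5:ZMod 7) ^ 3 + 1))
          (by norm_num) (by decide) (t+2) c7
  | (a+2) =>
    exfalso
    match u with
    | (b+1) =>
      have h1 : 2 ∣ 2 ^ (a+2) * 3 ^ y :=
        dvd_mul_of_dvd_left (dvd_pow_self 2 (by omega)) _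
      have h2 : 2 ∣ 2 ^ (b+1) * 5 ^ v :=
        dvd_mul_of_dvd_left (dvd_pow_self 2 (Nat.succ_ne_zero b)) _
      omega
    | 0 =>
      rw [pow_zero, one_mul] at E
      -- 2^(a+2) * 3^y = 5^v + 1 : contradiction mod 4
      have c4 := congrArg (Nat.cast : ℕ → ZMod 4) E
      push_cast at c4
      rw [pow_add, (by decide : (2 : ZMod 4) ^ 2 = 0), mul_zero, zero_mul,
          (by decide : (5 : ZMod 4) = 1), one_pow] at c4
      exact absurd c4 (by decide)
end
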